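/- arXiv:1507.07236 — 14 statements merged into one kernel-verified Lean document; each statement's English description precedes it below -/
import Mathlib

section
/- For positive integers m ≤ n, the map h/k ↦ (k-h)/k is an order-reversing bijection from F_n^m := {h/k ∈ F_n : h ≤ m} onto G_n^{n-m} := {h/k ∈ F_n : (n-m)+k-n ≤ h}. -/
/-- The Farey sequence of order `n`, as the set of (automatically reduced)
rationals `h/k` with `0 ≤ h ≤ k ≤ n`. -/
def farey (n : ℕ) : Set ℚ := {q | 0 ≤ q ∧ q ≤ 1 ∧ q.den ≤ n}

/-- `F_n^m = {h/k ∈ F_n : h ≤ m}`. -/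
def fareyF (n m : ℕ) : Set ℚ := {q ∈ farey n | q.num ≤ (m : ℤ)}

/-- `G_n^m = {h/k ∈ F_n : m + k - n ≤ h}`. -/
def fareyG (n m : ℕ) : Set ℚ := {q ∈ farey n | (m : ℤ) + q.den - n ≤ q.num}

/-- `F(B(n),m) = {h/k ∈ F_n : m + k - n ≤ h ≤ m}`. -/
def fareyB (n m : ℕ) : Set ℚ :=
  {q ∈ farey n | (m : ℤ) + q.den - n ≤ q.num ∧ q.num ≤ (m : ℤ)}

lemma one_sub_num_den (q : ℚ) :
    ((1:ℚ) - q).num = (q.den : ℤ) - q.num ∧ (((1:ℚ) - q).den : ℤ) = (q.den : ℤ) := by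
  have hd : (0:ℤ) < (q.den : ℤ) := by exact_mod_cast q.pos
  have h1 : IsCoprime q.num (q.den : ℤ) := Int.isCoprime_iff_gcd_eq_one.mpr q.reduced
  have h2 : IsCoprime ((q.den : ℤ) - q.num) (q.den : ℤ) := by
    have := (h1.neg_left).add_mul_left_left 1
    simpa [sub_eq_neg_add, mul_one] using this
  have hcop : Nat.Coprime ((q.den : ℤ) - q.num).natAbs ((q.den : ℤ)).natAbs :=
    Int.isCoprime_iff_gcd_eq_one.mp h2
  have heq : (1:ℚ) - q = (((q.den : ℤ) - q.num : ℤ) : ℚ) / (((q.den : ℤ) : ℤ) : ℚ) := by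
    have hne : ((q.den : ℤ) : ℚ) ≠ 0 := by
      exact_mod_cast Nat.cast_ne_zero.mpr q.den_ne_zero
    rw [eq_div_iff hne, sub_mul, one_mul]
    push_cast
    rw [Rat.mul_den_eq_num]
  exact ⟨by rw [heq, Rat.num_div_eq_of_coprime hd hcop],
    by rw [heq, Rat.den_div_eq_of_coprime hd hcop]⟩

/-- `h/k ↦ (k-h)/k` is an order-reversing bijection `F_n^m → G_n^{n-m}`. -/
theorem stmt3 (m n : ℕ) (hm : 0 < m) (hmn : m ≤ n) :
    Set.BijOn (fun q : ℚ => 1 - q) (fareyF n m) (fareyG n (n - m)) ∧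
    ∀ x ∈ fareyF n m, ∀ y ∈ fareyF n m, x < y → 1 - y < 1 - x := by
  have hnm : ((n - m : ℕ) : ℤ) = (n : ℤ) - m := by
    omega
  refine ⟨⟨?_, ?_, ?_⟩, ?_⟩
  · rintro q ⟨⟨h0, h1, hden⟩, hnum⟩
    obtain ⟨hn, hd⟩ := one_sub_num_den q
    dsimp only
    refine ⟨⟨by linarith, by linarith, ?_⟩, ?_⟩
    · have : (((1:ℚ) - q).den : ℤ) ≤ (n : ℤ) := by rw [hd]; exact_mod_cast hden
      exact_mod_cast this
    · rw [hn, hd, hnm]; linarith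
  · intro x _ y _ h
    dsimp only at h; linarith
  · rintro q ⟨⟨h0, h1, hden⟩, hnum⟩
    obtain ⟨hn, hd⟩ := one_sub_num_den q
    refine ⟨1 - q, ⟨⟨by linarith, by linarith, ?_⟩, ?_⟩, by ring⟩
    · have : (((1:ℚ) - q).den : ℤ) ≤ (n : ℤ) := by rw [hd]; exact_mod_cast hden
      exact_mod_cast this
    · rw [hn]; rw [hnm] at hnum; linarith
  · intro x _ y _ hxy
    linarith
end

section
/- For positive integers ℓ ≤ m ≤ n with m < n, the subsequence F(B(n),m)^ℓ := {h/k ∈ F(B(n),m) : h ≤ ℓ} equals F(B(n-m+ℓ), ℓ), i.e., {h/k ∈ F_n : m+k-n ≤ h ≤ m and h ≤ ℓ} = {h/k ∈ F_{n-m+ℓ} : ℓ+k-(n-m+ℓ) ≤ h ≤ ℓ}. -/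
theorem stmt5 (ℓ m n : ℕ) (hl : 0 < ℓ) (hlm : ℓ ≤ m) (hmn : m < n) :
    {q ∈ fareyB n m | q.num ≤ (ℓ : ℤ)} = fareyB (n - m + ℓ) ℓ := by
  ext q
  simp only [fareyB, farey, Set.mem_setOf_eq, Set.mem_sep_iff]
  constructor
  · rintro ⟨⟨⟨h0, h1, hd⟩, hg, hle⟩, hl'⟩
    exact ⟨⟨h0, h1, by omega⟩, by omega, by omega⟩
  · rintro ⟨⟨h0, h1, hd⟩, hg, hle⟩
    exact ⟨⟨⟨h0, h1, by omega⟩, by omega, by omega⟩, hle⟩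
end

section
/- For positive integers m ≤ ℓ ≤ n-1, the subsequence G(B(n),m)^ℓ := {h/k ∈ F(B(n),m) : ℓ+k-n ≤ h} equals F(B(n+m-ℓ), m), i.e., {h/k ∈ F_n : m+k-n ≤ h ≤ m and ℓ+k-n ≤ h} = {h/k ∈ F_{n+m-ℓ} : m+k-(n+m-ℓ) ≤ h ≤ m}. -/
theorem stmt6 (ℓ m n : ℕ) (hm : 0 < m) (hml : m ≤ ℓ) (hln : ℓ ≤ n - 1) :
    {q ∈ fareyB n m | (ℓ : ℤ) + q.den - n ≤ q.num} = fareyB (n + m - ℓ) m := by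
  ext q
  simp only [fareyB, farey, Set.mem_setOf_eq]
  constructor
  · rintro ⟨⟨⟨h0, h1, hk⟩, hg, hf⟩, hl⟩
    exact ⟨⟨h0, h1, by omega⟩, by omega, hf⟩
  · rintro ⟨⟨h0, h1, hk⟩, hg, hf⟩
    exact ⟨⟨⟨h0, h1, by omega⟩, by omega, hf⟩, by omega⟩
end

section
/- Let m, n, ℓ, λ be positive integers with ℓ ≤ m ≤ n and λ ≤ n-m. Then the intersection of {h/k ∈ F(B(n),m) : h ≤ ℓ} and {h/k ∈ F(B(n),m) : (n-λ)+k-n ≤ h} equals F(B(ℓ+λ), ℓ). -/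
theorem stmt7 (ℓ lam m n : ℕ) (hl : 0 < ℓ) (hlm : ℓ ≤ m) (hmn : m ≤ n)
    (hlam : 0 < lam) (hlamnm : lam ≤ n - m) :
    {q ∈ fareyB n m | q.num ≤ (ℓ : ℤ)} ∩
      {q ∈ fareyB n m | ((n - lam : ℕ) : ℤ) + q.den - n ≤ q.num} =
    fareyB (ℓ + lam) ℓ := by
  have hln : lam ≤ n := le_trans hlamnm (Nat.sub_le n m)
  ext q
  simp only [fareyB, farey, Set.mem_inter_iff, Set.mem_setOf_eq, Set.mem_sep_iff]
  have hcast : ((n - lam : ℕ) : ℤ) = (n : ℤ) - lam := by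
    omega
  constructor
  · rintro ⟨⟨⟨⟨h0, h1, hden⟩, hg, hf⟩, hle⟩, -, hglam⟩
    rw [hcast] at hglam
    refine ⟨⟨h0, h1, ?_⟩, ?_, hle⟩ <;> omega
  · rintro ⟨⟨h0, h1, hden⟩, hg, hf⟩
    have hdn : q.den ≤ n := by omega
    refine ⟨⟨⟨⟨h0, h1, hdn⟩, ?_, ?_⟩, hf⟩, ⟨⟨h0, h1, hdn⟩, ?_, ?_⟩, ?_⟩ <;>
      [skip; skip; skip; skip; rw [hcast]] <;> omega
end

section
/- For every positive integer m, the map h/k ↦ h/(h+k) (given in vector form by left multiplication by the matrix [[1,0],[1,1]]) is an order-preserving bijection from the Farey sequence F_m onto the lower half F^{≤1/2}(B(2m),m) := {h/k ∈ F_{2m} : k-m ≤ h ≤ m, h/k ≤ 1/2} of F(B(2m),m). -/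
/-- numerator and denominator of `q/(1+q)` for `q ≥ 0`. -/
lemma aux_numden (q : ℚ) (hq : 0 ≤ q) :
    (q / (1 + q)).num = q.num ∧ ((q / (1 + q)).den : ℤ) = q.num + q.den := by
  have hd : (0 : ℤ) < q.den := mod_cast q.pos
  have hn : 0 ≤ q.num := Rat.num_nonneg.mpr hq
  have hb : (0 : ℤ) < q.num + q.den := by linarith
  have hcop : Nat.Coprime q.num.natAbs (q.num + (q.den : ℤ)).natAbs := by
    rw [Int.natAbs_add_of_nonneg hn hd.le, Int.natAbs_natCast]
    rw [Nat.add_comm]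
    exact Nat.coprime_add_self_right.mpr q.reduced
  have heq : q / (1 + q) = ((q.num : ℚ)) / (((q.num + q.den : ℤ) : ℚ)) := by
    have h1 : (1 : ℚ) + q ≠ 0 := by positivity
    have h2 : (q.den : ℚ) ≠ 0 := by positivity
    have key : (q.den : ℚ) * q = q.num := by
      rw [mul_comm]; exact_mod_cast Rat.mul_den_eq_num q
    rw [div_eq_div_iff h1 (by exact_mod_cast hb.ne')]
    push_cast
    linear_combination key
  constructor
  · rw [heq]; exact Rat.num_div_eq_of_coprime hb hcop
  · rw [heq]; exact Rat.den_div_eq_of_coprime hb hcop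

/-- `h/k ↦ h/(h+k)`, i.e. `q ↦ q/(1+q)`, is an order-preserving bijection of
`F_m` onto the lower half of `F(B(2m),m)`. -/
theorem stmt8 (m : ℕ) (hm : 0 < m) :
    Set.BijOn (fun q : ℚ => q / (1 + q)) (farey m)
      {q ∈ fareyB (2 * m) m | q ≤ 1 / 2} ∧
    ∀ x ∈ farey m, ∀ y ∈ farey m, x < y → x / (1 + x) < y / (1 + y) := by
  have mono : ∀ x : ℚ, 0 ≤ x → ∀ y : ℚ, 0 ≤ y → x < y → x / (1 + x) < y / (1 + y) := by
    intro x hx y hy hxy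
    rw [div_lt_div_iff₀ (by linarith) (by linarith)]
    nlinarith
  constructor
  · refine ⟨?_, ?_, ?_⟩
    · -- MapsTo
      rintro q ⟨h0, h1, hden⟩
      obtain ⟨hnum, hd⟩ := aux_numden q h0
      have hdq : (0 : ℤ) < q.den := mod_cast q.pos
      have hn0 : 0 ≤ q.num := Rat.num_nonneg.mpr h0
      have hnd : q.num ≤ (q.den : ℤ) := by
        rw [← Rat.num_div_den q] at h1
        exact_mod_cast (div_le_one (by exact_mod_cast hdq)).mp h1
      have hdm : (q.den : ℤ) ≤ m := by exact_mod_cast hden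
      refine ⟨⟨⟨by positivity, ?_, ?_⟩, ?_, ?_⟩, ?_⟩
      · exact div_le_one_of_le₀ (by linarith) (by linarith)
      · have : ((q / (1 + q)).den : ℤ) ≤ (2 * m : ℕ) := by
          rw [hd]; push_cast; linarith
        exact_mod_cast this
      · rw [hnum, hd]; push_cast; linarith
      · rw [hnum]; linarith
      · rw [div_le_div_iff₀ (by linarith) (by norm_num)]; linarith
    · -- InjOn
      rintro x ⟨hx0, -, -⟩ y ⟨hy0, -, -⟩ hxy
      by_contra hne
      rcases lt_or_gt_of_ne hne with h | h
      · exact absurd hxy (mono x hx0 y hy0 h).ne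
      · exact absurd hxy.symm (mono y hy0 x hx0 h).ne
    · -- SurjOn
      rintro r ⟨⟨⟨hr0, hr1, hrden⟩, hlow, hhigh⟩, hhalf⟩
      have hr1' : r < 1 := lt_of_le_of_lt hhalf (by norm_num)
      have h1r : (0 : ℚ) < 1 - r := by linarith
      set q := r / (1 - r) with hqdef
      have hq0 : 0 ≤ q := div_nonneg hr0 h1r.le
      have hfq : q / (1 + q) = r := by
        rw [hqdef]
        field_simp
        ring
      obtain ⟨hnum, hd⟩ := aux_numden q hq0
      rw [hfq] at hnum hd
      refine ⟨q, ⟨hq0, ?_, ?_⟩, hfq⟩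
      · rw [div_le_one h1r]; linarith
      · have hlow' : (r.den : ℤ) - m ≤ r.num := by
          have : ((2 * m : ℕ) : ℤ) = 2 * m := by push_cast; ring
          omega
        have : (q.den : ℤ) ≤ m := by omega
        exact_mod_cast this
  · rintro x ⟨hx0, -, -⟩ y ⟨hy0, -, -⟩ hxy
    exact mono x hx0 y hy0 hxy
end

section
/- For every positive integer m, the map h/k ↦ k/(2k-h) (given in vector form by the matrix [[0,1],[-1,2]]) is an order-preserving bijection from the Farey sequence F_m onto the upper half F^{≥1/2}(B(2m),m) := {h/k ∈ F_{2m} : k-m ≤ h ≤ m, h/k ≥ 1/2} of F(B(2m),m). -/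
lemma copr {a b : ℤ} (h : Nat.Coprime a.natAbs b.natAbs) :
    Nat.Coprime b.natAbs (2 * b - a).natAbs := by
  rw [Nat.Coprime, ← Int.gcd, ← Int.isCoprime_iff_gcd_eq_one] at h ⊢
  have : IsCoprime b (-a) := (h.symm).neg_right
  have := this.add_mul_left_right 2
  simpa [sub_eq_neg_add, two_mul, mul_comm] using this

lemma num_le_den {q : ℚ} (h1 : q ≤ 1) : q.num ≤ (q.den : ℤ) := by
  have hd : (0:ℚ) < q.den := by exact_mod_cast q.pos
  have : (q.num : ℚ) ≤ (q.den : ℚ) := by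
    rw [← Rat.num_div_den q, div_le_one hd] at h1; exact h1
  exact_mod_cast this

lemma mul_den {q : ℚ} : q * (q.den : ℚ) = (q.num : ℚ) := by
  have hd : ((q.den:ℚ)) ≠ 0 := by exact_mod_cast q.pos.ne'
  nth_rewrite 1 [← Rat.num_div_den q]
  field_simp

lemma numden {q : ℚ} (h0 : 0 ≤ q) (h1 : q ≤ 1) :
    (1 / (2 - q)).num = (q.den : ℤ) ∧ ((1 / (2 - q)).den : ℤ) = 2 * q.den - q.num := by
  have hn0 : 0 ≤ q.num := Rat.num_nonneg.mpr h0
  have hnd : q.num ≤ (q.den : ℤ) := num_le_den h1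
  have hd : (0:ℤ) < q.den := by exact_mod_cast q.pos
  have hb0 : (0:ℤ) < 2 * q.den - q.num := by omega
  have hdQ : ((q.den : ℤ) : ℚ) ≠ 0 := by exact_mod_cast hd.ne'
  have hcop : Nat.Coprime ((q.den:ℤ)).natAbs (2 * (q.den:ℤ) - q.num).natAbs := by
    apply copr
    simpa using q.reduced
  have key : 1 / (2 - q) = ((q.den : ℤ) : ℚ) / ((2 * q.den - q.num : ℤ) : ℚ) := by
    have h2 : (2:ℚ) - q = ((2 * q.den - q.num : ℤ) : ℚ) / ((q.den : ℤ) : ℚ) := by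
      rw [eq_div_iff hdQ, sub_mul]
      push_cast
      rw [mul_den]
    rw [h2, one_div_div]
  rw [key]
  exact ⟨Rat.num_div_eq_of_coprime hb0 hcop, Rat.den_div_eq_of_coprime hb0 hcop⟩

lemma numden' {q : ℚ} (hhalf : 1/2 ≤ q) (h1 : q ≤ 1) :
    (2 - 1/q).num = 2 * q.num - (q.den : ℤ) ∧ ((2 - 1/q).den : ℤ) = q.num := by
  have hq0 : (0:ℚ) < q := by linarith
  have hn0 : (0:ℤ) < q.num := Rat.num_pos.mpr hq0
  have hnQ : ((q.num : ℤ) : ℚ) ≠ 0 := by exact_mod_cast hn0.ne'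
  have hdQ : ((q.den:ℚ)) ≠ 0 := by exact_mod_cast q.pos.ne'
  have hcop : Nat.Coprime ((q.num:ℤ)).natAbs (2 * q.num - (q.den:ℤ)).natAbs := by
    have := copr (a := (q.den:ℤ)) (b := q.num) (by simpa using q.reduced.symm)
    exact this
  have hinv : (1/q) * ((q.num : ℤ) : ℚ) = ((q.den : ℤ) : ℚ) := by
    nth_rewrite 1 [← Rat.num_div_den q]
    rw [one_div_div]
    push_cast
    field_simp
  have key : 2 - 1/q = ((2 * q.num - q.den : ℤ) : ℚ) / ((q.num : ℤ) : ℚ) := by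
    rw [eq_div_iff hnQ, sub_mul, hinv]
    push_cast
    ring
  rw [key]
  exact ⟨Rat.num_div_eq_of_coprime hn0 hcop.symm, Rat.den_div_eq_of_coprime hn0 hcop.symm⟩

/-- `h/k ↦ k/(2k-h)`, i.e. `q ↦ 1/(2-q)`, is an order-preserving bijection of
`F_m` onto the upper half of `F(B(2m),m)`. -/
theorem stmt9 (m : ℕ) (hm : 0 < m) :
    Set.BijOn (fun q : ℚ => 1 / (2 - q)) (farey m)
      {q ∈ fareyB (2 * m) m | 1 / 2 ≤ q} ∧
    ∀ x ∈ farey m, ∀ y ∈ farey m, x < y → 1 / (2 - x) < 1 / (2 - y) := by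
  constructor
  · refine ⟨?_, ?_, ?_⟩
    · -- MapsTo
      rintro q ⟨h0, h1, hden⟩
      obtain ⟨hnum, hden'⟩ := numden h0 h1
      have hn0 : 0 ≤ q.num := Rat.num_nonneg.mpr h0
      have hd : (0:ℤ) < q.den := by exact_mod_cast q.pos
      have hdm : (q.den : ℤ) ≤ m := by exact_mod_cast hden
      have hpos : (0:ℚ) < 2 - q := by linarith
      refine ⟨⟨⟨?_, ?_, ?_⟩, ?_, ?_⟩, ?_⟩
      · positivity
      · rw [div_le_one hpos]; linarith
      · have : ((1 / (2 - q)).den : ℤ) ≤ (2 * m : ℕ) := by push_cast; omega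
        exact_mod_cast this
      · rw [hnum, hden']; push_cast; omega
      · rw [hnum]; omega
      · rw [div_le_div_iff₀ (by norm_num) hpos]; linarith
    · -- InjOn
      rintro x ⟨hx0, hx1, -⟩ y ⟨hy0, hy1, -⟩ h
      have hx : (2:ℚ) - x ≠ 0 := by intro h'; linarith [sub_eq_zero.mp h']
      have hy : (2:ℚ) - y ≠ 0 := by intro h'; linarith [sub_eq_zero.mp h']
      have h' : 1 / (2 - x) = 1 / (2 - y) := h
      field_simp at h'
      linarith
    · -- SurjOn
      rintro q ⟨⟨⟨q0, q1, qden⟩, lo, hi⟩, hhalf⟩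
      have hq0 : (0:ℚ) < q := by linarith
      obtain ⟨pnum, pden⟩ := numden' hhalf q1
      refine ⟨2 - 1/q, ⟨?_, ?_, ?_⟩, ?_⟩
      · have : 1/q ≤ 2 := by rw [div_le_iff₀ hq0]; linarith
        linarith
      · have : 1 ≤ 1/q := by rw [le_div_iff₀ hq0]; linarith
        linarith
      · have : ((2 - 1/q).den : ℤ) ≤ (m : ℤ) := by rw [pden]; exact hi
        exact_mod_cast this
      · have : (2:ℚ) - (2 - 1/q) = 1/q := by ring
        simp only [this, one_div_one_div]
  · rintro x ⟨hx0, hx1, -⟩ y ⟨hy0, hy1, -⟩ hxy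
    have h1 : (0:ℚ) < 2 - y := by linarith
    have h2 : (0:ℚ) < 2 - x := by linarith
    rw [div_lt_div_iff₀ h2 h1]
    linarith
end

section
/- For every positive integer m, the map h/k ↦ (k-h)/(2k-h) (matrix [[-1,1],[-1,2]]) is an order-reversing bijection from the Farey sequence F_m onto F^{≤1/2}(B(2m),m), the fractions of F(B(2m),m) that are at most 1/2. -/
lemma numden_div (a b : ℤ) (hb : 0 < b) (hc : IsCoprime a b) :
    ((a : ℚ) / (b : ℚ)).num = a ∧ (((a : ℚ) / (b : ℚ)).den : ℤ) = b := by
  have h : Nat.Coprime a.natAbs b.natAbs := Int.isCoprime_iff_gcd_eq_one.mp hc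
  exact ⟨Rat.num_div_eq_of_coprime hb h, Rat.den_div_eq_of_coprime hb h⟩

lemma farey_num_le_den {n : ℕ} {q : ℚ} (hq : q ∈ farey n) :
    0 ≤ q.num ∧ q.num ≤ (q.den : ℤ) := by
  obtain ⟨h0, h1, _⟩ := hq
  refine ⟨Rat.num_nonneg.mpr h0, ?_⟩
  have hd : (0:ℚ) < (q.den : ℚ) := by exact_mod_cast q.pos
  have := Rat.num_div_den q
  rw [← this, div_le_one hd] at h1
  exact_mod_cast h1

lemma image_eq (q : ℚ) (h1 : q ≤ 1) :
    (1 - q) / (2 - q)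
      = (((q.den : ℤ) - q.num : ℤ) : ℚ) / ((2 * (q.den : ℤ) - q.num : ℤ) : ℚ) := by
  have hd : ((q.den : ℚ)) ≠ 0 := by
    have : (0:ℚ) < (q.den:ℚ) := by exact_mod_cast q.pos
    linarith
  have hdpos : (0:ℚ) < (q.den:ℚ) := by exact_mod_cast q.pos
  have h2 : (2 : ℚ) - q ≠ 0 := by
    have : q < 2 := lt_of_le_of_lt h1 (by norm_num)
    intro h; linarith
  have hnum : (q.num : ℚ) = q * q.den := (div_eq_iff hd).mp (Rat.num_div_den q)
  have h3 : ((2 * (q.den : ℤ) - q.num : ℤ) : ℚ) ≠ 0 := by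
    push_cast
    rw [hnum]
    intro hcon
    apply h2
    have : (2 - q) * (q.den : ℚ) = 0 := by linarith [hcon]
    rcases mul_eq_zero.mp this with h | h
    · exact h
    · exact absurd h hd
  rw [div_eq_div_iff h2 h3]
  push_cast
  rw [hnum]
  ring

lemma cop1 (q : ℚ) : IsCoprime ((q.den : ℤ) - q.num) (2 * (q.den : ℤ) - q.num) := by
  have h : IsCoprime q.num (q.den : ℤ) :=
    Int.isCoprime_iff_gcd_eq_one.mpr (by simpa [Int.gcd] using q.reduced)
  have h2 : IsCoprime ((q.den : ℤ) - q.num) ((q.den : ℤ)) := by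
    have := (h.neg_left).add_mul_left_left 1
    have e : -q.num + (q.den : ℤ) * 1 = (q.den : ℤ) - q.num := by ring
    rwa [e] at this
  have := h2.add_mul_left_right 1
  have e : (q.den : ℤ) + ((q.den : ℤ) - q.num) * 1 = 2 * (q.den : ℤ) - q.num := by ring
  rwa [e] at this

lemma cop2 (q : ℚ) : IsCoprime ((q.den : ℤ) - 2 * q.num) ((q.den : ℤ) - q.num) := by
  have h : IsCoprime (-q.num) ((q.den : ℤ)) :=
    (Int.isCoprime_iff_gcd_eq_one.mpr (by simpa [Int.gcd] using q.reduced)).neg_left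
  have h2 : IsCoprime (-q.num) ((q.den : ℤ) - q.num) := by
    have := h.add_mul_left_right 1
    have e : (q.den : ℤ) + -q.num * 1 = (q.den : ℤ) - q.num := by ring
    rwa [e] at this
  have := h2.add_mul_left_left 1
  have e : -q.num + ((q.den : ℤ) - q.num) * 1 = (q.den : ℤ) - 2 * q.num := by ring
  rwa [e] at this

/-- `h/k ↦ (k-h)/(2k-h)`, i.e. `q ↦ (1-q)/(2-q)`, is an order-reversing
bijection of `F_m` onto the lower half of `F(B(2m),m)`. -/
theorem stmt10 (m : ℕ) (hm : 0 < m) :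
    Set.BijOn (fun q : ℚ => (1 - q) / (2 - q)) (farey m)
      {q ∈ fareyB (2 * m) m | q ≤ 1 / 2} ∧
    ∀ x ∈ farey m, ∀ y ∈ farey m, x < y →
      (1 - y) / (2 - y) < (1 - x) / (2 - x) := by
  have anti : ∀ x ∈ farey m, ∀ y ∈ farey m, x < y →
      (1 - y) / (2 - y) < (1 - x) / (2 - x) := by
    intro x hx y hy hxy
    have hx2 : (0:ℚ) < 2 - x := by have := hx.2.1; linarith
    have hy2 : (0:ℚ) < 2 - y := by have := hy.2.1; linarith
    rw [div_lt_div_iff₀ hy2 hx2]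
    nlinarith
  have maps : ∀ q ∈ farey m, (1 - q)/(2 - q) ∈ {q ∈ fareyB (2 * m) m | q ≤ 1 / 2} := by
    intro q hq
    obtain ⟨hn0, hnd⟩ := farey_num_le_den hq
    obtain ⟨h0, h1, hden⟩ := hq
    have hdpos : (0:ℤ) < (q.den : ℤ) := by exact_mod_cast q.pos
    have hbpos : (0:ℤ) < 2 * (q.den : ℤ) - q.num := by linarith
    have hbposQ : (0:ℚ) < ((2 * (q.den : ℤ) - q.num : ℤ) : ℚ) := by exact_mod_cast hbpos
    have key := image_eq q h1
    obtain ⟨hnum, hden'⟩ := numden_div _ _ hbpos (cop1 q)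
    rw [← key] at hnum hden'
    have hdm : (q.den : ℤ) ≤ (m : ℤ) := by exact_mod_cast hden
    refine ⟨⟨⟨?_, ?_, ?_⟩, ?_, ?_⟩, ?_⟩
    · rw [key]
      apply div_nonneg _ hbposQ.le
      exact_mod_cast sub_nonneg.mpr hnd
    · rw [key, div_le_one hbposQ]
      push_cast
      linarith
    · have : (((1 - q)/(2 - q)).den : ℤ) ≤ ((2 * m : ℕ) : ℤ) := by
        rw [hden']; push_cast; linarith
      exact_mod_cast this
    · rw [hnum, hden']; push_cast; linarith
    · rw [hnum]; linarith
    · rw [key, div_le_div_iff₀ hbposQ (by norm_num : (0:ℚ) < 2)]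
      have : (0:ℚ) ≤ (q.num : ℚ) := by exact_mod_cast hn0
      push_cast
      linarith
  refine ⟨⟨maps, ?_, ?_⟩, anti⟩
  · -- InjOn
    intro x hx y hy hxy
    by_contra hne
    rcases lt_or_gt_of_ne hne with h | h
    · exact absurd hxy (ne_of_gt (anti x hx y hy h))
    · exact absurd hxy.symm (ne_of_gt (anti y hy x hx h))
  · -- SurjOn
    intro p hp
    obtain ⟨⟨⟨hp0, hp1, hpden⟩, hpB1, _⟩, hp12⟩ := hp
    have ha0 : 0 ≤ p.num := Rat.num_nonneg.mpr hp0
    have hdpos : (0:ℤ) < (p.den : ℤ) := by exact_mod_cast p.pos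
    have hdposQ : (0:ℚ) < (p.den : ℚ) := by exact_mod_cast p.pos
    have h2ab : 2 * p.num ≤ (p.den : ℤ) := by
      have := Rat.num_div_den p
      rw [← this, div_le_div_iff₀ hdposQ (by norm_num : (0:ℚ) < 2)] at hp12
      have : ((2 * p.num : ℤ) : ℚ) ≤ ((p.den : ℤ) : ℚ) := by push_cast; linarith
      exact_mod_cast this
    have hba : 0 < (p.den : ℤ) - p.num := by omega
    have hbaQ : (0:ℚ) < (((p.den : ℤ) - p.num : ℤ) : ℚ) := by exact_mod_cast hba
    have hbam : (p.den : ℤ) - p.num ≤ (m : ℤ) := by push_cast at hpB1; linarith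
    set x : ℚ := (((p.den : ℤ) - 2 * p.num : ℤ) : ℚ) / (((p.den : ℤ) - p.num : ℤ) : ℚ) with hxdef
    obtain ⟨hxn, hxd⟩ := numden_div _ _ hba (cop2 p)
    have hx0 : 0 ≤ x := by
      apply div_nonneg _ hbaQ.le
      have : (0:ℤ) ≤ (p.den : ℤ) - 2 * p.num := by omega
      exact_mod_cast this
    have hx1 : x ≤ 1 := by
      rw [hxdef, div_le_one hbaQ]
      have : (p.den : ℤ) - 2 * p.num ≤ (p.den : ℤ) - p.num := by omega
      exact_mod_cast this
    refine ⟨x, ⟨hx0, hx1, ?_⟩, ?_⟩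
    · have : (x.den : ℤ) ≤ (m : ℤ) := by rw [hxd]; exact hbam
      exact_mod_cast this
    · show (1 - x) / (2 - x) = p
      rw [image_eq x hx1, hxn, hxd]
      rw [show ((p.den : ℤ) - p.num) - ((p.den : ℤ) - 2 * p.num) = p.num by ring,
        show 2 * ((p.den : ℤ) - p.num) - ((p.den : ℤ) - 2 * p.num) = (p.den : ℤ) by ring]
      exact_mod_cast Rat.num_div_den p
end

section
/- For every positive integer m, the map h/k ↦ k/(h+k) (matrix [[0,1],[1,1]]) is an order-reversing bijection from the Farey sequence F_m onto F^{≥1/2}(B(2m),m), the fractions of F(B(2m),m) that are at least 1/2. -/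
lemma img_num_den (q : ℚ) (h0 : 0 ≤ q) :
    (1/(1+q)).num = q.den ∧ ((1/(1+q)).den : ℤ) = q.num + q.den := by
  have hd : (0:ℚ) < (q.den : ℚ) := by positivity
  have hn : 0 ≤ q.num := Rat.num_nonneg.2 h0
  have hpos : (0:ℤ) < q.num + q.den := by positivity
  have h1q : (0:ℚ) < 1 + q := by linarith
  have hdq : (q.den : ℚ) * q = (q.num : ℚ) := by
    have := Rat.num_div_den q
    rw [div_eq_iff hd.ne'] at this
    linarith [this]
  have key : 1/(1+q) = ((q.den : ℤ) : ℚ) / ((q.num + q.den : ℤ) : ℚ) := by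
    have h2 : (((q.num + q.den : ℤ)) : ℚ) ≠ 0 := by
      exact_mod_cast hpos.ne'
    rw [div_eq_div_iff h1q.ne' h2]
    push_cast
    linarith [hdq]
  have hcop : Nat.Coprime ((q.den : ℤ)).natAbs (q.num + q.den).natAbs := by
    have h1 : (q.num + q.den).natAbs = q.num.natAbs + q.den := by omega
    have h2 : ((q.den : ℤ)).natAbs = q.den := Int.natAbs_natCast _
    rw [h1, h2]
    exact (Nat.coprime_add_self_right).2 q.reduced.symm
  constructor
  · rw [key]; exact Rat.num_div_eq_of_coprime hpos hcop
  · rw [key]; exact Rat.den_div_eq_of_coprime hpos hcop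

lemma num_le_den_of_le_one {q : ℚ} (h : q ≤ 1) : q.num ≤ (q.den : ℤ) := by
  have hd : (0:ℚ) < (q.den : ℚ) := by positivity
  rw [← Rat.num_div_den q, div_le_one hd] at h
  exact_mod_cast h

/-- `h/k ↦ k/(h+k)`, i.e. `q ↦ 1/(1+q)`, is an order-reversing bijection of
`F_m` onto the upper half of `F(B(2m),m)`. -/
theorem stmt11 (m : ℕ) (hm : 0 < m) :
    Set.BijOn (fun q : ℚ => 1 / (1 + q)) (farey m)
      {q ∈ fareyB (2 * m) m | 1 / 2 ≤ q} ∧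
    ∀ x ∈ farey m, ∀ y ∈ farey m, x < y → 1 / (1 + y) < 1 / (1 + x) := by
  constructor
  · refine ⟨?_, ?_, ?_⟩
    · -- MapsTo
      rintro q ⟨hq0, hq1, hqd⟩
      obtain ⟨hnum, hden⟩ := img_num_den q hq0
      have hn : 0 ≤ q.num := Rat.num_nonneg.2 hq0
      have hnd : q.num ≤ (q.den : ℤ) := num_le_den_of_le_one hq1
      have hdm : (q.den : ℤ) ≤ (m : ℤ) := by exact_mod_cast hqd
      have h1q : (0:ℚ) < 1 + q := by linarith
      refine ⟨⟨⟨by positivity, ?_, ?_⟩, ?_, ?_⟩, ?_⟩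
      · rw [div_le_one h1q]; linarith
      · have : ((1/(1+q)).den : ℤ) ≤ 2 * m := by rw [hden]; push_cast; omega
        exact_mod_cast this
      · rw [hnum, hden]; omega
      · rw [hnum]; omega
      · rw [le_div_iff₀ h1q]; linarith
    · -- InjOn
      rintro x ⟨hx0, -, -⟩ y ⟨hy0, -, -⟩ h
      simp only [one_div] at h
      have := inv_inj.1 h
      linarith [this]
    · -- SurjOn
      rintro q' ⟨⟨⟨hq'0, hq'1, hq'd⟩, hlo, hhi⟩, hhalf⟩
      have hq'pos : 0 < q' := by linarith
      have hnpos : 0 < q'.num := Rat.num_pos.2 hq'pos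
      have hnq : (0:ℚ) < (q'.num : ℚ) := by exact_mod_cast hnpos
      have hdq : (0:ℚ) < (q'.den : ℚ) := by positivity
      have hnd : q'.num ≤ (q'.den : ℤ) := num_le_den_of_le_one hq'1
      have hd2n : (q'.den : ℤ) ≤ 2 * q'.num := by
        have := hhalf
        rw [← Rat.num_div_den q', le_div_iff₀ hdq] at this
        have : (q'.den : ℚ) ≤ 2 * (q'.num : ℚ) := by linarith
        exact_mod_cast this
      set p : ℚ := 1/q' - 1 with hp
      have hqd' : (q'.den : ℚ) * q' = (q'.num : ℚ) := by
        have := Rat.num_div_den q'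
        rw [div_eq_iff hdq.ne'] at this
        linarith
      have hpval : p = (((q'.den : ℤ) - q'.num : ℤ) : ℚ) / ((q'.num : ℤ) : ℚ) := by
        rw [hp, eq_div_iff (by exact_mod_cast hnpos.ne' : (((q'.num : ℤ)) : ℚ) ≠ 0)]
        push_cast
        field_simp
        linear_combination -hqd'
      refine ⟨p, ⟨?_, ?_, ?_⟩, ?_⟩
      · -- 0 ≤ p
        rw [hpval]
        apply div_nonneg _ hnq.le
        push_cast
        have : (q'.num : ℚ) ≤ (q'.den : ℚ) := by exact_mod_cast hnd
        linarith
      · -- p ≤ 1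
        rw [hpval, div_le_one hnq]
        push_cast
        have : (q'.den : ℚ) ≤ 2 * (q'.num : ℚ) := by exact_mod_cast hd2n
        linarith
      · -- p.den ≤ m
        have hdvd : (p.den : ℤ) ∣ (q'.num : ℤ) := by
          rw [hpval, ← Rat.divInt_eq_div]; exact Rat.den_dvd _ _
        have : (p.den : ℤ) ≤ q'.num := Int.le_of_dvd hnpos hdvd
        omega
      · -- maps back
        show 1 / (1 + p) = q'
        rw [hp]
        have : 1 + (1/q' - 1) = 1/q' := by ring
        rw [this, one_div_one_div]
  · -- order reversing
    rintro x ⟨hx0, -, -⟩ y ⟨hy0, -, -⟩ hxy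
    have hx : (0:ℚ) < 1 + x := by linarith
    rw [div_lt_div_iff₀ (by linarith) hx]
    linarith
end

section
/- For every positive integer m, the map h/k ↦ (k-2h)/(2k-3h) (matrix [[-2,1],[-3,2]]) is an order-reversing bijection of F^{≤1/2}(B(2m),m) onto itself. -/
lemma fkey (q : ℚ) (h2 : 2 * q.num ≤ (q.den : ℤ)) :
    ((1 - 2*q)/(2 - 3*q)).num = (q.den:ℤ) - 2*q.num ∧
    (((1 - 2*q)/(2 - 3*q)).den : ℤ) = 2*(q.den:ℤ) - 3*q.num := by
  set h := q.num with hh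
  set k := (q.den : ℤ) with hk
  have hk1 : 0 < k := by rw [hk]; exact_mod_cast q.pos
  have hdpos : 0 < 2*k - 3*h := by omega
  have hcophk : IsCoprime h k := by
    rw [Int.isCoprime_iff_gcd_eq_one]
    exact q.reduced
  have hcop : IsCoprime (k - 2*h) (2*k - 3*h) := by
    obtain ⟨u, v, huv⟩ := hcophk
    exact ⟨-2*u - 3*v, u + 2*v, by linear_combination huv⟩
  have hcop' : Nat.Coprime (k - 2*h).natAbs (2*k - 3*h).natAbs :=
    Int.isCoprime_iff_gcd_eq_one.mp hcop
  have hkne : (k : ℚ) ≠ 0 := by positivity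
  have hq : q = (h : ℚ) / (k : ℚ) := by
    rw [hh, hk]; exact (Rat.num_div_den q).symm
  have hdne : ((2*k - 3*h : ℤ) : ℚ) ≠ 0 := by exact_mod_cast hdpos.ne'
  have heq : (1 - 2*q)/(2 - 3*q) = ((k - 2*h : ℤ) : ℚ) / ((2*k - 3*h : ℤ) : ℚ) := by
    rw [hq]
    have e1 : (1:ℚ) - 2*((h:ℚ)/(k:ℚ)) = ((k:ℚ) - 2*(h:ℚ))/(k:ℚ) := by
      rw [eq_div_iff hkne]; ring_nf; field_simp
    have e2 : (2:ℚ) - 3*((h:ℚ)/(k:ℚ)) = (2*(k:ℚ) - 3*(h:ℚ))/(k:ℚ) := by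
      rw [eq_div_iff hkne]; ring_nf; field_simp
    rw [e1, e2, div_div_div_cancel_right₀ hkne]
    push_cast
    ring
  rw [heq]
  exact ⟨Rat.num_div_eq_of_coprime hdpos hcop',
    Rat.den_div_eq_of_coprime hdpos hcop'⟩

lemma half_iff (q : ℚ) : q ≤ 1/2 ↔ 2 * q.num ≤ (q.den : ℤ) := by
  constructor
  · intro hhalf
    have hq' : (q.num : ℚ) / (q.den : ℚ) ≤ 1/2 := by rw [Rat.num_div_den]; exact hhalf
    rw [div_le_div_iff₀ (by exact_mod_cast q.pos) (by norm_num)] at hq'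
    have h2 : ((2*q.num : ℤ):ℚ) ≤ ((q.den:ℤ):ℚ) := by push_cast; push_cast at hq'; linarith
    exact_mod_cast h2
  · intro hle
    rw [← Rat.num_div_den q, div_le_div_iff₀ (by exact_mod_cast q.pos) (by norm_num)]
    have : ((2*q.num : ℤ):ℚ) ≤ ((q.den:ℤ):ℚ) := by exact_mod_cast hle
    push_cast at this ⊢
    linarith

lemma fmem (m : ℕ) (q : ℚ)
    (hq : q ∈ {q ∈ fareyB (2 * m) m | q ≤ 1 / 2}) :
    (1 - 2*q)/(2 - 3*q) ∈ {q ∈ fareyB (2 * m) m | q ≤ 1 / 2} := by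
  obtain ⟨⟨⟨hq0, hq1, hden⟩, hG, hF⟩, hhalf⟩ := hq
  have hnum0 : 0 ≤ q.num := Rat.num_nonneg.mpr hq0
  have hhalf' : 2 * q.num ≤ (q.den : ℤ) := (half_iff q).mp hhalf
  obtain ⟨hnum, hden'⟩ := fkey q hhalf'
  have hden2 : (q.den : ℤ) ≤ 2 * m := by exact_mod_cast hden
  set r := (1 - 2*q)/(2 - 3*q) with hr
  set h := q.num
  set k := (q.den : ℤ)
  refine ⟨⟨⟨?_, ?_, ?_⟩, ?_, ?_⟩, ?_⟩
  · rw [← Rat.num_nonneg, hnum]; omega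
  · rw [← Rat.num_div_den r]
    rw [div_le_one (by exact_mod_cast r.pos)]
    rw [hnum]
    have : (((2*k - 3*h : ℤ)):ℚ) = (r.den : ℚ) := by exact_mod_cast hden'.symm
    rw [← this]
    have : ((k - 2*h : ℤ):ℚ) ≤ ((2*k - 3*h : ℤ):ℚ) := by
      have : k - 2*h ≤ 2*k - 3*h := by omega
      exact_mod_cast this
    push_cast at this ⊢
    linarith
  · have : (r.den : ℤ) ≤ ((2*m : ℕ) : ℤ) := by rw [hden']; push_cast; omega
    exact_mod_cast this
  · rw [hnum, hden']; push_cast; omega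
  · rw [hnum]; omega
  · rw [half_iff, hnum, hden']; omega

/-- `h/k ↦ (k-2h)/(2k-3h)`, i.e. `q ↦ (1-2q)/(2-3q)`, is an order-reversing
bijection of the lower half of `F(B(2m),m)` onto itself. -/
theorem stmt12 (m : ℕ) (hm : 0 < m) :
    Set.BijOn (fun q : ℚ => (1 - 2 * q) / (2 - 3 * q))
      {q ∈ fareyB (2 * m) m | q ≤ 1 / 2} {q ∈ fareyB (2 * m) m | q ≤ 1 / 2} ∧
    ∀ x ∈ {q ∈ fareyB (2 * m) m | q ≤ 1 / 2},
      ∀ y ∈ {q ∈ fareyB (2 * m) m | q ≤ 1 / 2}, x < y →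
        (1 - 2 * y) / (2 - 3 * y) < (1 - 2 * x) / (2 - 3 * x) := by
  set s := {q ∈ fareyB (2 * m) m | q ≤ 1 / 2} with hs
  have hmaps : Set.MapsTo (fun q : ℚ => (1 - 2 * q) / (2 - 3 * q)) s s :=
    fun q hq => fmem m q hq
  have hinv : ∀ q ∈ s, (fun q : ℚ => (1 - 2 * q) / (2 - 3 * q))
      ((fun q : ℚ => (1 - 2 * q) / (2 - 3 * q)) q) = q := by
    intro q hq
    have hhalf : q ≤ 1/2 := hq.2
    have hne : (2 : ℚ) - 3*q ≠ 0 := by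
      intro hc; linarith
    simp only
    have e1 : 1 - 2*((1 - 2*q)/(2 - 3*q)) = q/(2 - 3*q) := by
      rw [eq_div_iff hne, sub_mul, mul_assoc, div_mul_cancel₀ _ hne]; ring
    have e2 : 2 - 3*((1 - 2*q)/(2 - 3*q)) = 1/(2 - 3*q) := by
      field_simp
      ring
    rw [e1, e2, div_div_div_cancel_right₀ hne, div_one]
  constructor
  · exact Set.InvOn.bijOn ⟨fun q hq => hinv q hq, fun q hq => hinv q hq⟩ hmaps hmaps
  · intro x hx y hy hxy
    have hx2 : (0:ℚ) < 2 - 3*x := by have := hx.2; linarith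
    have hy2 : (0:ℚ) < 2 - 3*y := by have := hy.2; linarith
    rw [div_lt_div_iff₀ hy2 hx2]
    nlinarith
end

section
/- For every positive integer m, the map h/k ↦ (k-h)/(2k-3h) (matrix [[-1,1],[-3,2]]) is an order-preserving bijection from F^{≤1/2}(B(2m),m) onto F^{≥1/2}(B(2m),m), and the map h/k ↦ (2h-k)/(3h-k) (matrix [[2,-1],[3,-1]]) is its order-preserving inverse bijection from F^{≥1/2}(B(2m),m) onto F^{≤1/2}(B(2m),m). -/
lemma aux_num_eq (q : ℚ) : (q.num : ℚ) = q * q.den :=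
  (div_eq_iff (by exact_mod_cast q.pos.ne' : (q.den:ℚ) ≠ 0)).1 (Rat.num_div_den q)

lemma aux_lower_maps {m : ℕ} (hm : 0 < m) {q : ℚ}
    (hq : q ∈ fareyB (2*m) m) (hhalf : q ≤ 1/2) :
    (1-q)/(2-3*q) ∈ fareyB (2*m) m ∧ 1/2 ≤ (1-q)/(2-3*q) := by
  obtain ⟨⟨h0, h1, hden⟩, hlo, hhi⟩ := hq
  have hkpos : (0:ℚ) < (q.den:ℚ) := by exact_mod_cast q.pos
  have hnum : (q.num:ℚ) = q * q.den := aux_num_eq q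
  have hk1 : (1:ℤ) ≤ (q.den:ℤ) := by exact_mod_cast q.pos
  have hdenZ : (q.den:ℤ) ≤ 2*m := by exact_mod_cast hden
  have h0z : 0 ≤ q.num := Rat.num_nonneg.2 h0
  have h2z : 2*q.num ≤ (q.den:ℤ) := by
    have : 2*(q.num:ℚ) ≤ (q.den:ℚ) := by rw [hnum]; nlinarith
    exact_mod_cast this
  have hmz : (1:ℤ) ≤ (m:ℤ) := by exact_mod_cast hm
  have hd : (0:ℚ) < 2 - 3*q := by linarith
  have hden2' : 0 < 2*(q.den:ℤ) - 3*q.num := by omega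
  have hden2q : (0:ℚ) < ((2*(q.den:ℤ) - 3*q.num : ℤ):ℚ) := by exact_mod_cast hden2'
  have keyq : (1-q)/(2-3*q) = (((q.den:ℤ) - q.num : ℤ):ℚ)/((2*(q.den:ℤ) - 3*q.num : ℤ):ℚ) := by
    push_cast
    rw [div_eq_div_iff hd.ne' (by push_cast at hden2q ⊢; linarith), hnum]
    ring
  have hcopI : IsCoprime ((q.den:ℤ) - q.num) (2*(q.den:ℤ) - 3*q.num) := by
    have hc : IsCoprime q.num ((q.den:ℤ)) := by
      rw [Int.isCoprime_iff_gcd_eq_one]; exact q.reduced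
    obtain ⟨u, v, huv⟩ := hc
    exact ⟨2*u+3*v, -(u+v), by linear_combination huv⟩
  have hcop : Nat.Coprime ((q.den:ℤ) - q.num).natAbs (2*(q.den:ℤ) - 3*q.num).natAbs :=
    Int.isCoprime_iff_gcd_eq_one.1 hcopI
  have hnum' : ((1-q)/(2-3*q)).num = (q.den:ℤ) - q.num := by
    rw [keyq]; exact Rat.num_div_eq_of_coprime hden2' hcop
  have hden' : (((1-q)/(2-3*q)).den : ℤ) = 2*(q.den:ℤ) - 3*q.num := by
    rw [keyq]; exact Rat.den_div_eq_of_coprime hden2' hcop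
  have h1z : q.num ≤ (q.den:ℤ) := by omega
  refine ⟨⟨⟨?_, ?_, ?_⟩, ?_, ?_⟩, ?_⟩
  · exact Rat.num_nonneg.1 (by rw [hnum']; omega)
  · rw [keyq, div_le_one hden2q]
    exact_mod_cast (by omega : (q.den:ℤ) - q.num ≤ 2*(q.den:ℤ) - 3*q.num)
  · have : (((1-q)/(2-3*q)).den : ℤ) ≤ 2*m := by rw [hden']; omega
    exact_mod_cast this
  · rw [hnum', hden']; omega
  · rw [hnum']; omega
  · rw [keyq, div_le_div_iff₀ (by norm_num : (0:ℚ) < 2) hden2q]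
    exact_mod_cast (by omega : 1*(2*(q.den:ℤ) - 3*q.num) ≤ ((q.den:ℤ) - q.num)*2)

lemma aux_upper_maps {m : ℕ} (hm : 0 < m) {q : ℚ}
    (hq : q ∈ fareyB (2*m) m) (hhalf : 1/2 ≤ q) :
    (2*q-1)/(3*q-1) ∈ fareyB (2*m) m ∧ (2*q-1)/(3*q-1) ≤ 1/2 := by
  obtain ⟨⟨h0, h1, hden⟩, hlo, hhi⟩ := hq
  have hkpos : (0:ℚ) < (q.den:ℚ) := by exact_mod_cast q.pos
  have hnum : (q.num:ℚ) = q * q.den := aux_num_eq q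
  have hk1 : (1:ℤ) ≤ (q.den:ℤ) := by exact_mod_cast q.pos
  have hdenZ : (q.den:ℤ) ≤ 2*m := by exact_mod_cast hden
  have h0z : 0 ≤ q.num := Rat.num_nonneg.2 h0
  have h2z : (q.den:ℤ) ≤ 2*q.num := by
    have : (q.den:ℚ) ≤ 2*(q.num:ℚ) := by rw [hnum]; nlinarith
    exact_mod_cast this
  have h1z : q.num ≤ (q.den:ℤ) := by
    have : (q.num:ℚ) ≤ (q.den:ℚ) := by rw [hnum]; nlinarith
    exact_mod_cast this
  have hmz : (1:ℤ) ≤ (m:ℤ) := by exact_mod_cast hm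
  have hd : (0:ℚ) < 3*q - 1 := by linarith
  have hden2' : 0 < 3*q.num - (q.den:ℤ) := by omega
  have hden2q : (0:ℚ) < ((3*q.num - (q.den:ℤ) : ℤ):ℚ) := by exact_mod_cast hden2'
  have keyq : (2*q-1)/(3*q-1) = ((2*q.num - (q.den:ℤ) : ℤ):ℚ)/((3*q.num - (q.den:ℤ) : ℤ):ℚ) := by
    push_cast
    rw [div_eq_div_iff hd.ne' (by push_cast at hden2q ⊢; linarith), hnum]
    ring
  have hcopI : IsCoprime (2*q.num - (q.den:ℤ)) (3*q.num - (q.den:ℤ)) := by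
    have hc : IsCoprime q.num ((q.den:ℤ)) := by
      rw [Int.isCoprime_iff_gcd_eq_one]; exact q.reduced
    obtain ⟨u, v, huv⟩ := hc
    exact ⟨-(u+3*v), u+2*v, by linear_combination huv⟩
  have hcop : Nat.Coprime (2*q.num - (q.den:ℤ)).natAbs (3*q.num - (q.den:ℤ)).natAbs :=
    Int.isCoprime_iff_gcd_eq_one.1 hcopI
  have hnum' : ((2*q-1)/(3*q-1)).num = 2*q.num - (q.den:ℤ) := by
    rw [keyq]; exact Rat.num_div_eq_of_coprime hden2' hcop
  have hden' : (((2*q-1)/(3*q-1)).den : ℤ) = 3*q.num - (q.den:ℤ) := by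
    rw [keyq]; exact Rat.den_div_eq_of_coprime hden2' hcop
  refine ⟨⟨⟨?_, ?_, ?_⟩, ?_, ?_⟩, ?_⟩
  · exact Rat.num_nonneg.1 (by rw [hnum']; omega)
  · rw [keyq, div_le_one hden2q]
    exact_mod_cast (by omega : 2*q.num - (q.den:ℤ) ≤ 3*q.num - (q.den:ℤ))
  · have : (((2*q-1)/(3*q-1)).den : ℤ) ≤ 2*m := by rw [hden']; omega
    exact_mod_cast this
  · rw [hnum', hden']; omega
  · rw [hnum']; omega
  · rw [keyq, div_le_div_iff₀ hden2q (by norm_num : (0:ℚ) < 2)]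
    exact_mod_cast (by omega : (2*q.num - (q.den:ℤ))*2 ≤ 1*(3*q.num - (q.den:ℤ)))

/-- `q ↦ (1-q)/(2-3q)` is an order-preserving bijection from the lower half of
`F(B(2m),m)` onto the upper half, with order-preserving inverse
`q ↦ (2q-1)/(3q-1)`. -/
theorem stmt14 (m : ℕ) (hm : 0 < m) :
    Set.BijOn (fun q : ℚ => (1 - q) / (2 - 3 * q))
      {q ∈ fareyB (2 * m) m | q ≤ 1 / 2} {q ∈ fareyB (2 * m) m | 1 / 2 ≤ q} ∧
    (∀ x ∈ {q ∈ fareyB (2 * m) m | q ≤ 1 / 2},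
      ∀ y ∈ {q ∈ fareyB (2 * m) m | q ≤ 1 / 2}, x < y →
        (1 - x) / (2 - 3 * x) < (1 - y) / (2 - 3 * y)) ∧
    Set.BijOn (fun q : ℚ => (2 * q - 1) / (3 * q - 1))
      {q ∈ fareyB (2 * m) m | 1 / 2 ≤ q} {q ∈ fareyB (2 * m) m | q ≤ 1 / 2} ∧
    (∀ x ∈ {q ∈ fareyB (2 * m) m | 1 / 2 ≤ q},
      ∀ y ∈ {q ∈ fareyB (2 * m) m | 1 / 2 ≤ q}, x < y →
        (2 * x - 1) / (3 * x - 1) < (2 * y - 1) / (3 * y - 1)) ∧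
    (∀ x ∈ {q ∈ fareyB (2 * m) m | q ≤ 1 / 2},
      (2 * ((1 - x) / (2 - 3 * x)) - 1) / (3 * ((1 - x) / (2 - 3 * x)) - 1)
        = x) ∧
    (∀ y ∈ {q ∈ fareyB (2 * m) m | 1 / 2 ≤ q},
      (1 - (2 * y - 1) / (3 * y - 1)) / (2 - 3 * ((2 * y - 1) / (3 * y - 1)))
        = y) := by
  have hmapF : Set.MapsTo (fun q : ℚ => (1 - q) / (2 - 3 * q))
      {q ∈ fareyB (2 * m) m | q ≤ 1 / 2} {q ∈ fareyB (2 * m) m | 1 / 2 ≤ q} := by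
    rintro q ⟨hq, hh⟩
    exact aux_lower_maps hm hq hh
  have hmapG : Set.MapsTo (fun q : ℚ => (2 * q - 1) / (3 * q - 1))
      {q ∈ fareyB (2 * m) m | 1 / 2 ≤ q} {q ∈ fareyB (2 * m) m | q ≤ 1 / 2} := by
    rintro q ⟨hq, hh⟩
    exact aux_upper_maps hm hq hh
  have hli : ∀ x ∈ {q ∈ fareyB (2 * m) m | q ≤ 1 / 2},
      (2 * ((1 - x) / (2 - 3 * x)) - 1) / (3 * ((1 - x) / (2 - 3 * x)) - 1) = x := by
    rintro x ⟨-, hx⟩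
    have hd : (2:ℚ) - 3*x ≠ 0 := by intro h; rw [sub_eq_zero] at h; nlinarith
    have h2 : 3 * ((1 - x) / (2 - 3 * x)) - 1 = 1 / (2 - 3 * x) := by
      rw [eq_div_iff hd, sub_mul, mul_assoc, div_mul_cancel₀ _ hd]; ring
    rw [h2, div_div_eq_mul_div, div_one, sub_mul, mul_assoc, div_mul_cancel₀ _ hd]
    ring
  have hri : ∀ y ∈ {q ∈ fareyB (2 * m) m | 1 / 2 ≤ q},
      (1 - (2 * y - 1) / (3 * y - 1)) / (2 - 3 * ((2 * y - 1) / (3 * y - 1))) = y := by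
    rintro y ⟨-, hy⟩
    have hd : (3:ℚ)*y - 1 ≠ 0 := ne_of_gt (by linarith)
    have h2 : 2 - 3 * ((2 * y - 1) / (3 * y - 1)) = 1 / (3 * y - 1) := by
      rw [eq_div_iff hd, sub_mul, mul_assoc, div_mul_cancel₀ _ hd]; ring
    rw [h2, div_div_eq_mul_div, div_one, sub_mul, div_mul_cancel₀ _ hd]
    ring
  have hinvA : Set.InvOn (fun q : ℚ => (2 * q - 1) / (3 * q - 1))
      (fun q : ℚ => (1 - q) / (2 - 3 * q))
      {q ∈ fareyB (2 * m) m | q ≤ 1 / 2} {q ∈ fareyB (2 * m) m | 1 / 2 ≤ q} :=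
    ⟨fun x hx => hli x hx, fun y hy => hri y hy⟩
  refine ⟨hinvA.bijOn hmapF hmapG, ?_, hinvA.symm.bijOn hmapG hmapF, ?_, hli, hri⟩
  · rintro x ⟨-, hx⟩ y ⟨-, hy⟩ hxy
    rw [div_lt_div_iff₀ (by linarith) (by linarith)]
    nlinarith
  · rintro x ⟨-, hx⟩ y ⟨-, hy⟩ hxy
    rw [div_lt_div_iff₀ (by linarith) (by linarith)]
    nlinarith
end

section
/- Let m and n be positive integers with n ≥ 2m, and set s := ⌊log₂(n/m)⌋. For any ordered collection (M₁,…,M_s) of matrices each equal to [[1,0],[1,1]] or [[0,1],[-1,2]], the map sending h/k (as a column vector [h;k]) to (M_s · M_{s-1} · ⋯ · M₁) · [h;k] is an order-preserving injection from the Farey sequence F_m into the Farey sequence F_n; moreover every image fraction is ≤ 1/2 if M_s = [[1,0],[1,1]] and ≥ 1/2 if M_s = [[0,1],[-1,2]]. -/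
/-- Action of an integer 2×2 matrix on a fraction `h/k` written as the column
vector `[h; k]`. -/
def matAct (S : Matrix (Fin 2) (Fin 2) ℤ) (q : ℚ) : ℚ :=
  ((S 0 0 * q.num + S 0 1 * (q.den : ℤ) : ℤ) : ℚ) /
    ((S 1 0 * q.num + S 1 1 * (q.den : ℤ) : ℤ) : ℚ)

/-- The matrix `[[1,0],[1,1]]`. -/
def matA : Matrix (Fin 2) (Fin 2) ℤ := !![1, 0; 1, 1]

/-- The matrix `[[0,1],[-1,2]]`. -/
def matB : Matrix (Fin 2) (Fin 2) ℤ := !![0, 1; -1, 2]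

/-- The matrix `[[-1,1],[0,1]]`. -/
def matR : Matrix (Fin 2) (Fin 2) ℤ := !![-1, 1; 0, 1]

lemma num_den_facts (q : ℚ) (h0 : 0 ≤ q) (h1 : q ≤ 1) :
    0 ≤ q.num ∧ q.num ≤ (q.den : ℤ) := by
  refine ⟨Rat.num_nonneg.mpr h0, ?_⟩
  have hd : (0:ℚ) < (q.den : ℚ) := by positivity
  rw [← Rat.num_div_den q] at h1
  exact_mod_cast (div_le_one hd).mp h1

lemma step (x : Matrix (Fin 2) (Fin 2) ℤ) (hx : x = matA ∨ x = matB)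
    (q : ℚ) (h0 : 0 ≤ q) (h1 : q ≤ 1) :
    (matAct x q).num = x 0 0 * q.num + x 0 1 * (q.den : ℤ) ∧
    ((matAct x q).den : ℤ) = x 1 0 * q.num + x 1 1 * (q.den : ℤ) ∧
    0 ≤ matAct x q ∧ matAct x q ≤ 1 ∧ (matAct x q).den ≤ 2 * q.den ∧
    (x = matA → matAct x q ≤ 1/2) ∧ (x = matB → 1/2 ≤ matAct x q) := by
  obtain ⟨hnum, hnd⟩ := num_den_facts q h0 h1
  have hdpos : 0 < (q.den : ℤ) := by exact_mod_cast q.pos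
  have hred : Nat.Coprime q.num.natAbs q.den := q.reduced
  have hnumQ : (0:ℚ) ≤ (q.num : ℚ) := by exact_mod_cast hnum
  have hndQ : (q.num : ℚ) ≤ (q.den : ℚ) := by exact_mod_cast hnd
  have hdQ : (0:ℚ) < (q.den : ℚ) := by exact_mod_cast hdpos
  rcases hx with rfl | rfl
  · have e00 : matA 0 0 = 1 := by simp [matA]
    have e01 : matA 0 1 = 0 := by simp [matA]
    have e10 : matA 1 0 = 1 := by simp [matA]
    have e11 : matA 1 1 = 1 := by simp [matA]
    have hbpos : (0:ℤ) < q.num + q.den := by omega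
    have hcop : Nat.Coprime q.num.natAbs (q.num + (q.den:ℤ)).natAbs := by
      have h2 : (q.num + (q.den:ℤ)).natAbs = q.num.natAbs + q.den := by omega
      rw [h2]; simpa using hred
    have hval : matAct matA q = ((q.num : ℚ)) / (((q.num + (q.den:ℤ)) : ℤ) : ℚ) := by
      unfold matAct
      rw [e00, e01, e10, e11]
      congr 1 <;> push_cast <;> ring
    have hnum' : (matAct matA q).num = q.num := by
      rw [hval]; exact Rat.num_div_eq_of_coprime hbpos hcop
    have hden' : ((matAct matA q).den : ℤ) = q.num + q.den := by
      rw [hval]; exact Rat.den_div_eq_of_coprime hbpos hcop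
    have hbQ : (0:ℚ) < (((q.num + (q.den:ℤ)) : ℤ) : ℚ) := by exact_mod_cast hbpos
    refine ⟨by rw [hnum', e00, e01]; ring, by rw [hden', e10, e11]; ring, ?_, ?_, ?_, ?_, ?_⟩
    · rw [hval]; positivity
    · rw [hval, div_le_one hbQ]; push_cast; linarith
    · have : ((matAct matA q).den : ℤ) ≤ 2 * q.den := by omega
      exact_mod_cast this
    · intro _; rw [hval, div_le_div_iff₀ hbQ (by norm_num)]; push_cast; linarith
    · intro h; rw [h] at e00; simp [matB] at e00
  · have e00 : matB 0 0 = 0 := by simp [matB]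
    have e01 : matB 0 1 = 1 := by simp [matB]
    have e10 : matB 1 0 = -1 := by simp [matB]
    have e11 : matB 1 1 = 2 := by simp [matB]
    have hbpos : (0:ℤ) < -q.num + 2 * q.den := by omega
    have hcop : Nat.Coprime ((q.den:ℤ)).natAbs (-q.num + 2 * (q.den:ℤ)).natAbs := by
      have h2 : (-q.num + 2 * (q.den:ℤ)).natAbs = 2 * q.den - q.num.natAbs := by omega
      have h3 : ((q.den:ℤ)).natAbs = q.den := Int.natAbs_natCast _
      rw [h2, h3]
      have hdvd : Nat.gcd q.den (2 * q.den - q.num.natAbs) ∣ q.num.natAbs := by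
        have d1 := Nat.gcd_dvd_left q.den (2 * q.den - q.num.natAbs)
        have d2 := Nat.gcd_dvd_right q.den (2 * q.den - q.num.natAbs)
        have h4 := Nat.dvd_sub (Dvd.dvd.mul_left d1 2) d2
        have he : 2 * q.den - (2 * q.den - q.num.natAbs) = q.num.natAbs := by omega
        rwa [he] at h4
      have hfin := Nat.dvd_gcd hdvd (Nat.gcd_dvd_left _ _)
      rw [hred] at hfin
      exact Nat.dvd_one.mp hfin
    have hval : matAct matB q = (((q.den:ℤ) : ℤ) : ℚ) / (((-q.num + 2 * (q.den:ℤ)) : ℤ) : ℚ) := by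
      unfold matAct
      rw [e00, e01, e10, e11]
      congr 1 <;> push_cast <;> ring
    have hnum' : (matAct matB q).num = q.den := by
      rw [hval]; exact Rat.num_div_eq_of_coprime hbpos hcop
    have hden' : ((matAct matB q).den : ℤ) = -q.num + 2 * q.den := by
      rw [hval]; exact Rat.den_div_eq_of_coprime hbpos hcop
    have hbQ : (0:ℚ) < (((-q.num + 2 * (q.den:ℤ)) : ℤ) : ℚ) := by exact_mod_cast hbpos
    refine ⟨by rw [hnum', e00, e01]; ring, by rw [hden', e10, e11]; ring, ?_, ?_, ?_, ?_, ?_⟩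
    · rw [hval]; positivity
    · rw [hval, div_le_one hbQ]; push_cast; linarith
    · have : ((matAct matB q).den : ℤ) ≤ 2 * q.den := by omega
      exact_mod_cast this
    · intro h; rw [h] at e00; simp [matA] at e00
    · intro _; rw [hval, div_le_div_iff₀ (by norm_num) hbQ]; push_cast; linarith

lemma cross_of_lt {p q : ℚ} (h : p < q) : p.num * q.den < q.num * p.den := by
  have hp : (0:ℚ) < (p.den:ℚ) := by positivity
  have hq : (0:ℚ) < (q.den:ℚ) := by positivity
  rw [← Rat.num_div_den p, ← Rat.num_div_den q, div_lt_div_iff₀ hp hq] at h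
  exact_mod_cast h

lemma step_mono (x : Matrix (Fin 2) (Fin 2) ℤ) (hx : x = matA ∨ x = matB)
    (p q : ℚ) (hp0 : 0 ≤ p) (hp1 : p ≤ 1) (hq0 : 0 ≤ q) (hq1 : q ≤ 1)
    (hlt : p < q) : matAct x p < matAct x q := by
  obtain ⟨hpnum, hpnd⟩ := num_den_facts p hp0 hp1
  obtain ⟨hqnum, hqnd⟩ := num_den_facts q hq0 hq1
  have hpd : 0 < (p.den : ℤ) := by exact_mod_cast p.pos
  have hqd : 0 < (q.den : ℤ) := by exact_mod_cast q.pos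
  have hcross := cross_of_lt hlt
  rcases hx with rfl | rfl
  · have hbp : (0:ℚ) < ((1 * p.num + 1 * (p.den:ℤ) : ℤ) : ℚ) := by
      have h5 : (0:ℤ) < 1 * p.num + 1 * p.den := by omega
      exact_mod_cast h5
    have hbq : (0:ℚ) < ((1 * q.num + 1 * (q.den:ℤ) : ℤ) : ℚ) := by
      have h5 : (0:ℤ) < 1 * q.num + 1 * q.den := by omega
      exact_mod_cast h5
    unfold matAct
    rw [show matA 0 0 = 1 by simp [matA], show matA 0 1 = 0 by simp [matA],
        show matA 1 0 = 1 by simp [matA], show matA 1 1 = 1 by simp [matA]]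
    rw [div_lt_div_iff₀ hbp hbq]
    have hcQ : (p.num : ℚ) * q.den < (q.num : ℚ) * p.den := by exact_mod_cast hcross
    push_cast
    nlinarith [hcQ]
  · have hbp : (0:ℚ) < ((-1 * p.num + 2 * (p.den:ℤ) : ℤ) : ℚ) := by
      have : (0:ℤ) < -1 * p.num + 2 * p.den := by omega
      exact_mod_cast this
    have hbq : (0:ℚ) < ((-1 * q.num + 2 * (q.den:ℤ) : ℤ) : ℚ) := by
      have : (0:ℤ) < -1 * q.num + 2 * q.den := by omega
      exact_mod_cast this
    unfold matAct
    rw [show matB 0 0 = 0 by simp [matB], show matB 0 1 = 1 by simp [matB],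
        show matB 1 0 = -1 by simp [matB], show matB 1 1 = 2 by simp [matB]]
    rw [div_lt_div_iff₀ hbp hbq]
    have hcQ : (p.num : ℚ) * q.den < (q.num : ℚ) * p.den := by exact_mod_cast hcross
    push_cast
    nlinarith [hcQ]

lemma step_comp (P x : Matrix (Fin 2) (Fin 2) ℤ) (hx : x = matA ∨ x = matB)
    (q : ℚ) (h0 : 0 ≤ q) (h1 : q ≤ 1) :
    matAct (P * x) q = matAct P (matAct x q) := by
  obtain ⟨hn, hd, -⟩ := step x hx q h0 h1
  unfold matAct at hn hd ⊢
  rw [hn, hd]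
  have m00 : (P * x) 0 0 = P 0 0 * x 0 0 + P 0 1 * x 1 0 := by
    simp [Matrix.mul_apply, Fin.sum_univ_two]
  have m01 : (P * x) 0 1 = P 0 0 * x 0 1 + P 0 1 * x 1 1 := by
    simp [Matrix.mul_apply, Fin.sum_univ_two]
  have m10 : (P * x) 1 0 = P 1 0 * x 0 0 + P 1 1 * x 1 0 := by
    simp [Matrix.mul_apply, Fin.sum_univ_two]
  have m11 : (P * x) 1 1 = P 1 0 * x 0 1 + P 1 1 * x 1 1 := by
    simp [Matrix.mul_apply, Fin.sum_univ_two]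
  rw [m00, m01, m10, m11]
  congr 1 <;> push_cast <;> ring

lemma main_list : ∀ (l : List (Matrix (Fin 2) (Fin 2) ℤ)),
    (∀ x ∈ l, x = matA ∨ x = matB) →
    (∀ q : ℚ, 0 ≤ q → q ≤ 1 →
      0 ≤ matAct l.reverse.prod q ∧ matAct l.reverse.prod q ≤ 1 ∧
      (matAct l.reverse.prod q).den ≤ 2 ^ l.length * q.den) ∧
    (∀ p q : ℚ, 0 ≤ p → p ≤ 1 → 0 ≤ q → q ≤ 1 → p < q →
      matAct l.reverse.prod p < matAct l.reverse.prod q) ∧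
    (∀ h : l ≠ [], ∀ q : ℚ, 0 ≤ q → q ≤ 1 →
      (l.getLast h = matA → matAct l.reverse.prod q ≤ 1/2) ∧
      (l.getLast h = matB → 1/2 ≤ matAct l.reverse.prod q)) := by
  intro l
  induction l with
  | nil =>
    intro _
    have hid : ∀ q : ℚ, matAct (([] : List (Matrix (Fin 2) (Fin 2) ℤ)).reverse.prod) q = q := by
      intro q
      show matAct (1 : Matrix (Fin 2) (Fin 2) ℤ) q = q
      unfold matAct
      norm_num [Matrix.one_apply]
      exact_mod_cast Rat.num_div_den q
    refine ⟨fun q h0 h1 => ?_, fun p q _ _ _ _ hlt => ?_, fun h => absurd rfl h⟩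
    · rw [hid]; exact ⟨h0, h1, by simp⟩
    · rw [hid, hid]; exact hlt
  | cons x t ih =>
    intro hl
    have hx : x = matA ∨ x = matB := hl x List.mem_cons_self
    have ht : ∀ y ∈ t, y = matA ∨ y = matB := fun y hy => hl y (List.mem_cons_of_mem _ hy)
    obtain ⟨ih1, ih2, ih3⟩ := ih ht
    have hprod : (x :: t).reverse.prod = t.reverse.prod * x := by
      rw [List.reverse_cons, List.prod_append, List.prod_singleton]
    refine ⟨fun q h0 h1 => ?_, fun p q hp0 hp1 hq0 hq1 hlt => ?_, fun h q h0 h1 => ?_⟩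
    · obtain ⟨-, -, s0, s1, sden, -, -⟩ := step x hx q h0 h1
      obtain ⟨i0, i1, iden⟩ := ih1 (matAct x q) s0 s1
      rw [hprod, step_comp _ x hx q h0 h1]
      refine ⟨i0, i1, ?_⟩
      calc (matAct t.reverse.prod (matAct x q)).den
          ≤ 2 ^ t.length * (matAct x q).den := iden
        _ ≤ 2 ^ t.length * (2 * q.den) := Nat.mul_le_mul_left _ sden
        _ = 2 ^ (x :: t).length * q.den := by rw [List.length_cons]; ring
    · obtain ⟨-, -, sp0, sp1, -, -, -⟩ := step x hx p hp0 hp1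
      obtain ⟨-, -, sq0, sq1, -, -, -⟩ := step x hx q hq0 hq1
      rw [hprod, step_comp _ x hx p hp0 hp1, step_comp _ x hx q hq0 hq1]
      exact ih2 _ _ sp0 sp1 sq0 sq1 (step_mono x hx p q hp0 hp1 hq0 hq1 hlt)
    · obtain ⟨-, -, s0, s1, -, hA, hB⟩ := step x hx q h0 h1
      cases t with
      | nil =>
        have hlast : (x :: ([] : List (Matrix (Fin 2) (Fin 2) ℤ))).getLast h = x := rfl
        have hpr : (x :: ([] : List (Matrix (Fin 2) (Fin 2) ℤ))).reverse.prod = x := by simp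
        rw [hlast, hpr]
        exact ⟨hA, hB⟩
      | cons y t' =>
        have hne : (y :: t') ≠ [] := by simp
        have hlast : (x :: y :: t').getLast h = (y :: t').getLast hne :=
          List.getLast_cons hne
        rw [hlast, hprod, step_comp _ x hx q h0 h1]
        exact ih3 hne (matAct x q) s0 s1


/-- Lemma 4 (Lemma `th:3`): for `s = ⌊log₂(n/m)⌋` and any collection
`(M₁, …, M_s)` of matrices from `{A, B}`, the map
`[h;k] ↦ M_s ⋯ M₁ · [h;k]` is an order-preserving injection `F_m → F_n`;
images are `≤ 1/2` when `M_s = A` and `≥ 1/2` when `M_s = B`. -/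
theorem stmt15 (m n : ℕ) (hm : 0 < m) (hn : 2 * m ≤ n)
    (M : Fin (Nat.log 2 (n / m)) → Matrix (Fin 2) (Fin 2) ℤ)
    (hM : ∀ i, M i = matA ∨ M i = matB) :
    Set.MapsTo (matAct ((List.ofFn M).reverse.prod)) (farey m) (farey n) ∧
    Set.InjOn (matAct ((List.ofFn M).reverse.prod)) (farey m) ∧
    (∀ x ∈ farey m, ∀ y ∈ farey m, x < y →
      matAct ((List.ofFn M).reverse.prod) x <
        matAct ((List.ofFn M).reverse.prod) y) ∧
    (∀ i : Fin (Nat.log 2 (n / m)), (i : ℕ) = Nat.log 2 (n / m) - 1 →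
      (M i = matA → ∀ x ∈ farey m,
        matAct ((List.ofFn M).reverse.prod) x ≤ 1 / 2) ∧
      (M i = matB → ∀ x ∈ farey m,
        1 / 2 ≤ matAct ((List.ofFn M).reverse.prod) x)) := by
  have hl : ∀ x ∈ List.ofFn M, x = matA ∨ x = matB := by
    intro x hxl
    rw [List.mem_ofFn] at hxl
    obtain ⟨i, rfl⟩ := hxl
    exact hM i
  obtain ⟨h1, h2, h3⟩ := main_list (List.ofFn M) hl
  have hlen : (List.ofFn M).length = Nat.log 2 (n / m) := List.length_ofFn
  have hpow : 2 ^ Nat.log 2 (n / m) * m ≤ n := by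
    have h2nm : n / m ≠ 0 := by
      have : 2 ≤ n / m := (Nat.le_div_iff_mul_le hm).mpr (by omega)
      omega
    calc 2 ^ Nat.log 2 (n / m) * m ≤ (n / m) * m :=
          Nat.mul_le_mul_right m (Nat.pow_log_le_self 2 h2nm)
      _ ≤ n := Nat.div_mul_le_self n m
  have hmono : ∀ x ∈ farey m, ∀ y ∈ farey m, x < y →
      matAct ((List.ofFn M).reverse.prod) x < matAct ((List.ofFn M).reverse.prod) y := by
    intro a ha b hb hlt
    exact h2 a b ha.1 ha.2.1 hb.1 hb.2.1 hlt
  refine ⟨?_, ?_, hmono, ?_⟩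
  · intro q hq
    obtain ⟨hq0, hq1, hqd⟩ := hq
    obtain ⟨a0, a1, ad⟩ := h1 q hq0 hq1
    refine ⟨a0, a1, ?_⟩
    calc (matAct ((List.ofFn M).reverse.prod) q).den
        ≤ 2 ^ (List.ofFn M).length * q.den := ad
      _ ≤ 2 ^ Nat.log 2 (n / m) * m := by rw [hlen]; exact Nat.mul_le_mul_left _ hqd
      _ ≤ n := hpow
  · intro a ha b hb hab
    rcases lt_trichotomy a b with h | h | h
    · exact absurd hab (ne_of_lt (hmono a ha b hb h))
    · exact h
    · exact absurd hab.symm (ne_of_lt (hmono b hb a ha h))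
  · intro i hi
    have hne : List.ofFn M ≠ [] := by
      intro hcon
      have : (List.ofFn M).length = 0 := by rw [hcon]; rfl
      rw [hlen] at this
      have := i.pos
      omega
    have hlast : (List.ofFn M).getLast hne = M i := by
      rw [List.getLast_ofFn]
      exact congrArg M (Fin.ext (by simpa using hi.symm))
    constructor
    · intro hMA q hq
      exact (h3 hne q hq.1 hq.2.1).1 (hlast.trans hMA)
    · intro hMB q hq
      exact (h3 hne q hq.1 hq.2.1).2 (hlast.trans hMB)
end

section
/- Let m, n be positive integers with n ≥ 2m and s := ⌊log₂(n/m)⌋. Let M and N each be a product of s matrices, each factor being [[1,0],[1,1]] or [[0,1],[-1,2]]. Then the map [h;k] ↦ N·M⁻¹·[h;k] is an order-preserving bijection from the subsequence M·F_m of F_n onto the subsequence N·F_m of F_n, and the map [h;k] ↦ N·[[-1,1],[0,1]]·M⁻¹·[h;k] is an order-reversing bijection from M·F_m onto N·F_m. -/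
namespace Stmt16Aux

def vN (S : Matrix (Fin 2) (Fin 2) ℤ) (q : ℚ) : ℤ := S 0 0 * q.num + S 0 1 * (q.den : ℤ)
def vD (S : Matrix (Fin 2) (Fin 2) ℤ) (q : ℚ) : ℤ := S 1 0 * q.num + S 1 1 * (q.den : ℤ)

lemma matAct_eq (S : Matrix (Fin 2) (Fin 2) ℤ) (q : ℚ) :
    matAct S q = (vN S q : ℚ) / (vD S q : ℚ) := rfl

lemma vN_mul (S T : Matrix (Fin 2) (Fin 2) ℤ) (q : ℚ) :
    vN (S * T) q = S 0 0 * vN T q + S 0 1 * vD T q := by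
  simp [vN, vD, Matrix.mul_apply, Fin.sum_univ_two]; ring

lemma vD_mul (S T : Matrix (Fin 2) (Fin 2) ℤ) (q : ℚ) :
    vD (S * T) q = S 1 0 * vN T q + S 1 1 * vD T q := by
  simp [vN, vD, Matrix.mul_apply, Fin.sum_univ_two]; ring

lemma rat_lt_iff (q r : ℚ) : q < r ↔ q.num * r.den < r.num * q.den := by
  have hq : (q.den : ℚ) ≠ 0 := by exact_mod_cast q.den_pos.ne'
  have hr : (r.den : ℚ) ≠ 0 := by exact_mod_cast r.den_pos.ne'
  rw [show q < r ↔ (q.num : ℚ) / q.den < (r.num : ℚ) / r.den by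
    rw [Rat.num_div_den, Rat.num_div_den]]
  rw [div_lt_div_iff₀ (by exact_mod_cast q.den_pos) (by exact_mod_cast r.den_pos)]
  exact_mod_cast Iff.rfl

lemma matAct_mul (S T : Matrix (Fin 2) (Fin 2) ℤ) (q : ℚ) (h : 0 < vD T q) :
    matAct (S * T) q = matAct S (matAct T q) := by
  set r := matAct T q with hr
  have hdq : (q.den : ℚ) ≠ 0 := by exact_mod_cast q.den_pos.ne'
  have hcross : r.num * vD T q = vN T q * r.den := by
    have h1 : (r.num : ℚ) / r.den = (vN T q : ℚ) / (vD T q : ℚ) := by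
      rw [Rat.num_div_den]; exact hr.trans (matAct_eq T q)
    have h2 : (r.num : ℚ) * (vD T q : ℚ) = (vN T q : ℚ) * r.den := by
      field_simp at h1
      linarith [h1]
    exact_mod_cast h2
  have hdvd : (r.den : ℤ) ∣ vD T q := by
    have hcop : IsCoprime (r.den : ℤ) r.num := by
      rw [Int.isCoprime_iff_gcd_eq_one, Int.gcd_comm]; exact r.reduced
    exact hcop.dvd_of_dvd_mul_left ⟨vN T q, by linarith [hcross]⟩
  obtain ⟨g, hg⟩ := hdvd
  have hdr : (0:ℤ) < r.den := by exact_mod_cast r.pos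
  have hgpos : 0 < g := by
    by_contra hgle
    push_neg at hgle
    nlinarith
  have hvN : vN T q = r.num * g := by
    have : r.num * (r.den * g) = vN T q * r.den := by rw [← hg]; exact hcross
    have h2 : (r.num * g) * r.den = vN T q * r.den := by ring_nf; ring_nf at this; linarith
    exact (mul_right_cancel₀ hdr.ne' h2).symm
  have hgQ : (g : ℚ) ≠ 0 := by exact_mod_cast hgpos.ne'
  rw [matAct_eq (S*T) q, vN_mul, vD_mul, hvN, hg, matAct_eq S r]
  simp only [vN, vD]
  push_cast
  rw [show (S 0 0 : ℚ) * ((r.num:ℚ) * g) + S 0 1 * ((r.den:ℚ) * g) =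
      (g:ℚ) * (S 0 0 * r.num + S 0 1 * r.den) by ring,
    show (S 1 0 : ℚ) * ((r.num:ℚ) * g) + S 1 1 * ((r.den:ℚ) * g) =
      (g:ℚ) * (S 1 0 * r.num + S 1 1 * r.den) by ring,
    mul_div_mul_left _ _ hgQ]

lemma bounds_of_mem {r : ℚ} (h0 : 0 ≤ r) (h1 : r ≤ 1) : 0 ≤ r.num ∧ r.num ≤ r.den := by
  constructor
  · exact Rat.num_nonneg.mpr h0
  · have h2 := (rat_lt_iff 1 r).not.mp (not_lt.mpr h1)
    push_neg at h2
    norm_num at h2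
    exact h2


lemma det_prod (L : List (Matrix (Fin 2) (Fin 2) ℤ)) (hmem : ∀ X ∈ L, X = matA ∨ X = matB) :
    L.prod.det = 1 := by
  induction L with
  | nil => simp
  | cons X L ih =>
    rw [List.prod_cons, Matrix.det_mul, ih (fun Y hY => hmem Y (List.mem_cons_of_mem X hY))]
    rcases hmem X List.mem_cons_self with rfl | rfl <;>
      simp [matA, matB, Matrix.det_fin_two_of]

lemma key (L : List (Matrix (Fin 2) (Fin 2) ℤ)) (hmem : ∀ X ∈ L, X = matA ∨ X = matB)
    (q : ℚ) (h0 : 0 ≤ q.num) (h1 : q.num ≤ (q.den : ℤ)) :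
    0 ≤ vN L.prod q ∧ vN L.prod q ≤ vD L.prod q ∧ 0 < vD L.prod q := by
  induction L with
  | nil =>
    have : (0:ℤ) < q.den := by exact_mod_cast q.pos
    simp only [List.prod_nil, vN, vD, Matrix.one_apply_eq,
      Matrix.one_apply_ne (show (0:Fin 2) ≠ 1 by decide),
      Matrix.one_apply_ne (show (1:Fin 2) ≠ 0 by decide)]
    omega
  | cons X L ih =>
    obtain ⟨ha, hac, hc⟩ := ih (fun Y hY => hmem Y (List.mem_cons_of_mem X hY))
    rw [List.prod_cons, vN_mul, vD_mul]
    rcases hmem X List.mem_cons_self with rfl | rfl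
    · rw [show matA 0 0 = 1 from rfl, show matA 0 1 = 0 from rfl,
        show matA 1 0 = 1 from rfl, show matA 1 1 = 1 from rfl]
      omega
    · rw [show matB 0 0 = 0 from rfl, show matB 0 1 = 1 from rfl,
        show matB 1 0 = -1 from rfl, show matB 1 1 = 2 from rfl]
      omega

lemma mono_iff (L : List (Matrix (Fin 2) (Fin 2) ℤ)) (hmem : ∀ X ∈ L, X = matA ∨ X = matB)
    {q q' : ℚ} (h0 : 0 ≤ q.num) (h1 : q.num ≤ (q.den : ℤ))
    (h0' : 0 ≤ q'.num) (h1' : q'.num ≤ (q'.den : ℤ)) :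
    matAct L.prod q < matAct L.prod q' ↔ q < q' := by
  obtain ⟨ha, hac, hc⟩ := key L hmem q h0 h1
  obtain ⟨ha', hac', hc'⟩ := key L hmem q' h0' h1'
  have hdet := det_prod L hmem
  have iden : vN L.prod q * vD L.prod q' - vN L.prod q' * vD L.prod q
      = L.prod.det * (q.num * (q'.den:ℤ) - q'.num * (q.den:ℤ)) := by
    simp only [vN, vD, Matrix.det_fin_two]; ring
  rw [hdet, one_mul] at iden
  have main : vN L.prod q * vD L.prod q' < vN L.prod q' * vD L.prod q ↔
      q.num * (q'.den:ℤ) < q'.num * (q.den:ℤ) := by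
    constructor <;> intro h <;> linarith
  rw [matAct_eq, matAct_eq,
    div_lt_div_iff₀ (by exact_mod_cast hc) (by exact_mod_cast hc'), rat_lt_iff q q']
  exact_mod_cast main

lemma matR_act (q : ℚ) : matAct matR q = 1 - q := by
  have hd : (q.den : ℚ) ≠ 0 := by exact_mod_cast q.den_pos.ne'
  have hnum : (q.num : ℚ) = q * q.den := by
    have h := Rat.num_div_den q
    rw [div_eq_iff hd] at h
    exact h
  rw [matAct_eq]
  simp only [vN, vD, show matR 0 0 = -1 from rfl, show matR 0 1 = 1 from rfl,
    show matR 1 0 = 0 from rfl, show matR 1 1 = 1 from rfl]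
  push_cast
  field_simp
  rw [hnum]
  ring

end Stmt16Aux

open Stmt16Aux

/-- Theorem `th:7`, first two claims. -/
theorem stmt16 (m n : ℕ) (hm : 0 < m) (hn : 2 * m ≤ n)
    (LM LN : List (Matrix (Fin 2) (Fin 2) ℤ))
    (hLM : LM.length = Nat.log 2 (n / m))
    (hLN : LN.length = Nat.log 2 (n / m))
    (hLMmem : ∀ X ∈ LM, X = matA ∨ X = matB)
    (hLNmem : ∀ X ∈ LN, X = matA ∨ X = matB) :
    Set.BijOn (matAct (LN.prod * (LM.prod)⁻¹))
      (matAct LM.prod '' farey m) (matAct LN.prod '' farey m) ∧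
    (∀ x ∈ matAct LM.prod '' farey m, ∀ y ∈ matAct LM.prod '' farey m,
      x < y → matAct (LN.prod * (LM.prod)⁻¹) x <
        matAct (LN.prod * (LM.prod)⁻¹) y) ∧
    Set.BijOn (matAct (LN.prod * matR * (LM.prod)⁻¹))
      (matAct LM.prod '' farey m) (matAct LN.prod '' farey m) ∧
    (∀ x ∈ matAct LM.prod '' farey m, ∀ y ∈ matAct LM.prod '' farey m,
      x < y → matAct (LN.prod * matR * (LM.prod)⁻¹) y <
        matAct (LN.prod * matR * (LM.prod)⁻¹) x) := by
  set M := LM.prod with hMdef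
  set N := LN.prod with hNdef
  have hdetM : M.det = 1 := det_prod LM hLMmem
  have hMunit : IsUnit M.det := by rw [hdetM]; exact isUnit_one
  have hMinv : N * M⁻¹ * M = N := by
    rw [Matrix.mul_assoc, Matrix.nonsing_inv_mul M hMunit, Matrix.mul_one]
  have hRinv : N * matR * M⁻¹ * M = N * matR := by
    rw [Matrix.mul_assoc, Matrix.nonsing_inv_mul M hMunit, Matrix.mul_one]
  have bnds : ∀ q ∈ farey m, 0 ≤ q.num ∧ q.num ≤ (q.den : ℤ) := by
    rintro q ⟨h0, h1, -⟩
    exact bounds_of_mem h0 h1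
  have hsub : ∀ q ∈ farey m, 1 - q ∈ farey m := by
    rintro q ⟨h0, h1, hden⟩
    refine ⟨by simpa using h1, by linarith, ?_⟩
    have hdvd : (1 - q).den ∣ q.den := by
      have h := Rat.add_den_dvd 1 (-q)
      rw [← sub_eq_add_neg] at h
      simpa using h
    exact le_trans (Nat.le_of_dvd q.pos hdvd) hden
  have vDpos : ∀ q ∈ farey m, 0 < vD M q := fun q hq =>
    (key LM hLMmem q (bnds q hq).1 (bnds q hq).2).2.2
  have coc1 : ∀ q ∈ farey m, matAct (N * M⁻¹) (matAct M q) = matAct N q := by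
    intro q hq
    rw [← matAct_mul _ M q (vDpos q hq), hMinv]
  have coc2 : ∀ q ∈ farey m,
      matAct (N * matR * M⁻¹) (matAct M q) = matAct N (1 - q) := by
    intro q hq
    have hvDR : 0 < vD matR q := by
      simp only [vD, show matR 1 0 = 0 from rfl, show matR 1 1 = 1 from rfl]
      have : (0:ℤ) < q.den := by exact_mod_cast q.pos
      omega
    rw [← matAct_mul _ M q (vDpos q hq), hRinv, matAct_mul N matR q hvDR, matR_act]
  have monM : ∀ q ∈ farey m, ∀ q' ∈ farey m, (matAct M q < matAct M q' ↔ q < q') :=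
    fun q hq q' hq' => mono_iff LM hLMmem (bnds q hq).1 (bnds q hq).2
      (bnds q' hq').1 (bnds q' hq').2
  have monN : ∀ q ∈ farey m, ∀ q' ∈ farey m, (matAct N q < matAct N q' ↔ q < q') :=
    fun q hq q' hq' => mono_iff LN hLNmem (bnds q hq).1 (bnds q hq).2
      (bnds q' hq').1 (bnds q' hq').2
  have injN : ∀ q ∈ farey m, ∀ q' ∈ farey m, matAct N q = matAct N q' → q = q' := by
    intro q hq q' hq' h
    by_contra hne
    rcases lt_or_gt_of_ne hne with hlt | hlt
    · exact absurd h (ne_of_lt ((monN q hq q' hq').mpr hlt))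
    · exact absurd h.symm (ne_of_lt ((monN q' hq' q hq).mpr hlt))
  refine ⟨⟨?_, ?_, ?_⟩, ?_, ⟨?_, ?_, ?_⟩, ?_⟩
  · rintro x ⟨q, hq, rfl⟩
    exact ⟨q, hq, (coc1 q hq).symm⟩
  · rintro x ⟨q, hq, rfl⟩ y ⟨q', hq', rfl⟩ h
    rw [coc1 q hq, coc1 q' hq'] at h
    rw [injN q hq q' hq' h]
  · rintro y ⟨q, hq, rfl⟩
    exact ⟨matAct M q, ⟨q, hq, rfl⟩, coc1 q hq⟩
  · rintro x ⟨q, hq, rfl⟩ y ⟨q', hq', rfl⟩ hxy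
    rw [coc1 q hq, coc1 q' hq']
    exact (monN q hq q' hq').mpr ((monM q hq q' hq').mp hxy)
  · rintro x ⟨q, hq, rfl⟩
    exact ⟨1 - q, hsub q hq, (coc2 q hq).symm⟩
  · rintro x ⟨q, hq, rfl⟩ y ⟨q', hq', rfl⟩ h
    rw [coc2 q hq, coc2 q' hq'] at h
    have := injN _ (hsub q hq) _ (hsub q' hq') h
    have hqq : q = q' := by linarith
    rw [hqq]
  · rintro y ⟨q, hq, rfl⟩
    refine ⟨matAct M (1 - q), ⟨1 - q, hsub q hq, rfl⟩, ?_⟩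
    rw [coc2 _ (hsub q hq), sub_sub_cancel]
  · rintro x ⟨q, hq, rfl⟩ y ⟨q', hq', rfl⟩ hxy
    rw [coc2 q hq, coc2 q' hq']
    have hlt : q < q' := (monM q hq q' hq').mp hxy
    exact (monN _ (hsub q' hq') _ (hsub q hq)).mpr (by linarith)
end

section
/- Let m, n be positive integers with n ≥ 2m, m > 1, and s := ⌊log₂(n/m)⌋, and let M be a product of s matrices each equal to [[1,0],[1,1]] or [[0,1],[-1,2]]. Then the matrix M·[[-1,1],[0,1]]·M⁻¹ is involutory (its square is the identity), the induced map on M·F_m ⊂ F_n is an order-reversing bijection of M·F_m onto itself, and the fraction M·[1;2] is a fixed point of this map. -/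
/-- `matAct` as a Möbius transformation. -/
lemma matAct_eq (S : Matrix (Fin 2) (Fin 2) ℤ) (x : ℚ) :
    matAct S x = ((S 0 0 : ℚ) * x + S 0 1) / ((S 1 0 : ℚ) * x + S 1 1) := by
  have hk : (x.den : ℚ) ≠ 0 := by positivity
  have hxn : (x : ℚ) * (x.den : ℚ) = (x.num : ℚ) := Rat.mul_den_eq_num x
  have h1 : ((S 0 0 : ℚ) * x + S 0 1) = ((S 0 0 * x.num + S 0 1 * x.den : ℤ) : ℚ) / x.den := by
    rw [eq_div_iff hk]; push_cast; rw [← hxn]; ring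
  have h2 : ((S 1 0 : ℚ) * x + S 1 1) = ((S 1 0 * x.num + S 1 1 * x.den : ℤ) : ℚ) / x.den := by
    rw [eq_div_iff hk]; push_cast; rw [← hxn]; ring
  rw [matAct, h1, h2, div_div_div_cancel_right₀ hk]

/-- Composition law for `matAct`. -/
lemma matAct_comp (S T : Matrix (Fin 2) (Fin 2) ℤ) (q : ℚ)
    (hD : ((T 1 0 : ℚ) * q + T 1 1) ≠ 0) :
    matAct S (matAct T q) = matAct (S * T) q := by
  have e : ∀ i j, (((S * T) i j : ℤ) : ℚ) = (S i 0 : ℚ) * T 0 j + (S i 1 : ℚ) * T 1 j := by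
    intro i j
    rw [Matrix.mul_apply, Fin.sum_univ_two]
    push_cast; ring
  rw [matAct_eq, matAct_eq, matAct_eq, e, e, e, e]
  set D : ℚ := (T 1 0 : ℚ) * q + T 1 1 with hDdef
  set E : ℚ := ((S 1 0 : ℚ) * T 0 0 + (S 1 1 : ℚ) * T 1 0) * q +
    ((S 1 0 : ℚ) * T 0 1 + (S 1 1 : ℚ) * T 1 1) with hEdef
  have hden : (S 1 0 : ℚ) * (((T 0 0 : ℚ) * q + T 0 1) / D) + S 1 1 = E / D := by
    field_simp; ring
  have hnum : (S 0 0 : ℚ) * (((T 0 0 : ℚ) * q + T 0 1) / D) + S 0 1 =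
      (((S 0 0 : ℚ) * T 0 0 + (S 0 1 : ℚ) * T 1 0) * q +
        ((S 0 0 : ℚ) * T 0 1 + (S 0 1 : ℚ) * T 1 1)) / D := by
    field_simp; ring
  rw [hden, hnum, div_div_div_cancel_right₀ hD]

/-- Invariant preserved by left multiplication by `matA` and `matB`. -/
def Good (M : Matrix (Fin 2) (Fin 2) ℤ) : Prop :=
  M.det = 1 ∧ 0 < M 1 1 ∧ 0 < M 1 0 + M 1 1 ∧ 0 ≤ M 0 1 ∧ M 0 1 ≤ M 1 1 ∧
    0 ≤ M 0 0 + M 0 1 ∧ M 0 0 + M 0 1 ≤ M 1 0 + M 1 1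

lemma good_one : Good 1 := by
  refine ⟨Matrix.det_one, ?_, ?_, ?_, ?_, ?_, ?_⟩ <;> simp [Matrix.one_apply]

lemma good_mul {X M : Matrix (Fin 2) (Fin 2) ℤ} (hX : X = matA ∨ X = matB)
    (hM : Good M) : Good (X * M) := by
  obtain ⟨hdet, h1, h2, h3, h4, h5, h6⟩ := hM
  have hdA : matA.det = 1 := by simp [matA, Matrix.det_fin_two_of]
  have hdB : matB.det = 1 := by norm_num [matB, Matrix.det_fin_two_of]
  rcases hX with hX | hX <;> subst hX <;>
    refine ⟨by rw [Matrix.det_mul, hdet, mul_one]; assumption, ?_, ?_, ?_, ?_, ?_, ?_⟩ <;>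
    simp [matA, matB, Matrix.mul_apply, Fin.sum_univ_two] <;> omega

lemma good_prod (LM : List (Matrix (Fin 2) (Fin 2) ℤ))
    (h : ∀ X ∈ LM, X = matA ∨ X = matB) : Good LM.prod := by
  induction LM with
  | nil => simpa using good_one
  | cons X L ih =>
    rw [List.prod_cons]
    exact good_mul (h X List.mem_cons_self) (ih fun Y hY => h Y (List.mem_cons_of_mem X hY))

lemma good_denpos {M : Matrix (Fin 2) (Fin 2) ℤ} (hM : Good M) {q : ℚ}
    (h0 : 0 ≤ q) (h1 : q ≤ 1) : 0 < (M 1 0 : ℚ) * q + M 1 1 := by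
  obtain ⟨-, hd, hcd, -⟩ := hM
  have hd' : (0 : ℚ) < (M 1 1 : ℤ) := by exact_mod_cast hd
  have hcd' : (0 : ℚ) < ((M 1 0 + M 1 1 : ℤ) : ℚ) := by exact_mod_cast hcd
  push_cast at hcd'
  nlinarith [mul_nonneg h0 hcd'.le, mul_nonneg (sub_nonneg.2 h1) hd'.le]

/-- `matAct M` is strictly increasing on `[0,1]` for good `M`. -/
lemma matAct_lt {M : Matrix (Fin 2) (Fin 2) ℤ} (hM : Good M) {p q : ℚ}
    (hp0 : 0 ≤ p) (hp1 : p ≤ 1) (hq0 : 0 ≤ q) (hq1 : q ≤ 1) (hpq : p < q) :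
    matAct M p < matAct M q := by
  have hDp := good_denpos hM hp0 hp1
  have hDq := good_denpos hM hq0 hq1
  rw [matAct_eq, matAct_eq, div_lt_div_iff₀ hDp hDq]
  have hdet : ((M 0 0 : ℚ) * M 1 1 - M 0 1 * M 1 0) = 1 := by
    have h := hM.1
    rw [Matrix.det_fin_two] at h
    exact_mod_cast congrArg (fun z : ℤ => (z : ℚ)) h
  nlinarith [hdet, hpq]

lemma den_one_sub (q : ℚ) : (1 - q).den = q.den := by
  have hk : (0 : ℤ) < (q.den : ℤ) := by exact_mod_cast q.pos
  have hc : IsCoprime (q.num) ((q.den : ℤ)) := by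
    rw [Int.isCoprime_iff_gcd_eq_one]
    exact q.reduced
  have hcop : IsCoprime ((q.den : ℤ) - q.num) ((q.den : ℤ)) := by
    have h := (hc.neg_left).add_mul_left_left 1
    rwa [mul_one, neg_add_eq_sub] at h
  have hcopN : Nat.Coprime ((q.den : ℤ) - q.num).natAbs ((q.den : ℤ)).natAbs := by
    rwa [Int.isCoprime_iff_gcd_eq_one] at hcop
  have hval : (1 - q : ℚ) = (((q.den : ℤ) - q.num : ℤ) : ℚ) / ((q.den : ℤ) : ℚ) := by
    have hk' : ((q.den : ℤ) : ℚ) ≠ 0 := by exact_mod_cast hk.ne'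
    rw [eq_div_iff hk']
    push_cast
    rw [sub_mul, one_mul, Rat.mul_den_eq_num]
  have := Rat.den_div_eq_of_coprime hk hcopN
  rw [← hval] at this
  exact_mod_cast this

lemma matR_act (q : ℚ) : matAct matR q = 1 - q := by
  rw [matAct_eq]
  norm_num [matR]; ring

/-- Theorem `th:7`, last claim: `M·R·M⁻¹` is involutory and induces an
order-reversing bijection of `M·F_m` onto itself with fixed point `M·[1;2]`. -/
theorem stmt17 (m n : ℕ) (hm : 1 < m) (hn : 2 * m ≤ n)
    (LM : List (Matrix (Fin 2) (Fin 2) ℤ))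
    (hLM : LM.length = Nat.log 2 (n / m))
    (hLMmem : ∀ X ∈ LM, X = matA ∨ X = matB) :
    (LM.prod * matR * (LM.prod)⁻¹) * (LM.prod * matR * (LM.prod)⁻¹) = 1 ∧
    Set.BijOn (matAct (LM.prod * matR * (LM.prod)⁻¹))
      (matAct LM.prod '' farey m) (matAct LM.prod '' farey m) ∧
    (∀ x ∈ matAct LM.prod '' farey m, ∀ y ∈ matAct LM.prod '' farey m,
      x < y → matAct (LM.prod * matR * (LM.prod)⁻¹) y <
        matAct (LM.prod * matR * (LM.prod)⁻¹) x) ∧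
    matAct (LM.prod * matR * (LM.prod)⁻¹) (matAct LM.prod (1 / 2)) =
      matAct LM.prod (1 / 2) := by
  set M := LM.prod with hMdef
  have hG : Good M := good_prod LM hLMmem
  have hU : IsUnit M.det := by rw [hG.1]; exact isUnit_one
  have hMN : M * M⁻¹ = 1 := Matrix.mul_nonsing_inv M hU
  have hNM : M⁻¹ * M = 1 := Matrix.nonsing_inv_mul M hU
  have hRR : matR * matR = 1 := by
    rw [matR, Matrix.mul_fin_two, Matrix.one_fin_two]; norm_num
  -- the key conjugation formula
  have key : ∀ q : ℚ, 0 ≤ q → q ≤ 1 →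
      matAct (M * matR * M⁻¹) (matAct M q) = matAct M (1 - q) := by
    intro q h0 h1
    have hD : ((M 1 0 : ℚ) * q + M 1 1) ≠ 0 := (good_denpos hG h0 h1).ne'
    rw [matAct_comp _ M q hD]
    have hMR : M * matR * M⁻¹ * M = M * matR := by
      rw [Matrix.mul_assoc, hNM, Matrix.mul_one]
    have hRden : ((matR 1 0 : ℚ) * q + matR 1 1) ≠ 0 := by norm_num [matR]
    rw [hMR, ← matAct_comp M matR q hRden, matR_act]
  -- membership of `1 - q` in `farey m`
  have hfar : ∀ q ∈ farey m, (1 - q) ∈ farey m := by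
    rintro q ⟨h0, h1, hden⟩
    exact ⟨by linarith, by linarith, by rw [den_one_sub]; exact hden⟩
  -- the map sends the set into itself
  have hmaps : Set.MapsTo (matAct (M * matR * M⁻¹))
      (matAct M '' farey m) (matAct M '' farey m) := by
    rintro x ⟨q, hq, rfl⟩
    exact ⟨1 - q, hfar q hq, (key q hq.1 hq.2.1).symm⟩
  -- involution on the set
  have hinv : ∀ x ∈ matAct M '' farey m,
      matAct (M * matR * M⁻¹) (matAct (M * matR * M⁻¹) x) = x := by
    rintro x ⟨q, hq, rfl⟩
    rw [key q hq.1 hq.2.1, key (1 - q) (by linarith [hq.2.1]) (by linarith [hq.1])]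
    norm_num
  refine ⟨?_, ?_, ?_, ?_⟩
  · -- involutory matrix
    have hNc : ∀ X, M⁻¹ * (M * X) = X := fun X => by
      rw [← Matrix.mul_assoc, hNM, Matrix.one_mul]
    have hRc : matR * (matR * M⁻¹) = M⁻¹ := by
      rw [← Matrix.mul_assoc, hRR, Matrix.one_mul]
    calc M * matR * M⁻¹ * (M * matR * M⁻¹)
        = M * (matR * (M⁻¹ * (M * (matR * M⁻¹)))) := by
          simp only [Matrix.mul_assoc]
      _ = M * (matR * (matR * M⁻¹)) := by rw [hNc]
      _ = M * M⁻¹ := by rw [hRc]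
      _ = 1 := hMN
  · -- bijection
    exact Set.InvOn.bijOn ⟨hinv, hinv⟩ hmaps hmaps
  · -- order-reversing
    rintro x ⟨p, hp, rfl⟩ y ⟨q, hq, rfl⟩ hxy
    have hpq : p < q := by
      by_contra h
      push_neg at h
      rcases lt_or_eq_of_le h with h' | h'
      · exact absurd (matAct_lt hG hq.1 hq.2.1 hp.1 hp.2.1 h') (lt_asymm hxy)
      · rw [h'] at hxy; exact lt_irrefl _ hxy
    rw [key p hp.1 hp.2.1, key q hq.1 hq.2.1]
    exact matAct_lt hG (by linarith [hq.2.1]) (by linarith [hq.1])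
      (by linarith [hp.2.1]) (by linarith [hp.1]) (by linarith)
  · -- fixed point
    rw [key (1 / 2) (by norm_num) (by norm_num)]
    norm_num
end

section
/- For positive integers m < n, the number of fractions in F(B(n),m) := {h/k ∈ F_n : m+k-n ≤ h ≤ m} equals 2 + Σ_{d≥1} μ(d)·⌊m/d⌋·⌊(n-m)/d⌋, where μ is the number-theoretic Möbius function. -/
open Finset ArithmeticFunction

lemma sum_moebius_divisors (g : ℕ) (hg : g ≠ 0) :
    ∑ d ∈ g.divisors, (moebius d : ℤ) = if g = 1 then 1 else 0 := by
  have h := congrArg (fun f : ArithmeticFunction ℤ => f g) moebius_mul_coe_zeta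
  simp only [mul_apply, one_apply] at h
  rw [← h, ← Nat.sum_divisorsAntidiagonal (fun a b => (moebius a : ℤ))]
  apply Finset.sum_congr rfl
  intro x hx
  rw [Nat.mem_divisorsAntidiagonal] at hx
  have : x.2 ≠ 0 := by intro h2; rw [h2, mul_zero] at hx; exact hg hx.1.symm
  simp [natCoe_apply, zeta_apply, this]

lemma count_coprime_pairs (m M n : ℕ) (hmn : m ≤ n) (hMn : M ≤ n) :
    ((((Finset.Ioc 0 m ×ˢ Finset.Ioc 0 M).filter
        (fun p => Nat.gcd p.1 p.2 = 1)).card : ℤ)) =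
      ∑ d ∈ Finset.Icc 1 n, (moebius d : ℤ) * ((m / d : ℕ) : ℤ) * ((M / d : ℕ) : ℤ) := by
  rw [Finset.card_filter]
  push_cast
  have key : ∀ p ∈ (Finset.Ioc 0 m ×ˢ Finset.Ioc 0 M),
      (if Nat.gcd p.1 p.2 = 1 then (1 : ℤ) else 0) =
      ∑ d ∈ Finset.Icc 1 n, (if d ∣ p.1 ∧ d ∣ p.2 then (moebius d : ℤ) else 0) := by
    intro p hp
    rw [Finset.mem_product, Finset.mem_Ioc, Finset.mem_Ioc] at hp
    have hg : Nat.gcd p.1 p.2 ≠ 0 := by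
      simp [Nat.gcd_eq_zero_iff]; omega
    rw [← sum_moebius_divisors _ hg, ← Finset.sum_filter]
    apply Finset.sum_congr _ (fun _ _ => rfl)
    ext d
    simp only [Finset.mem_filter, Finset.mem_Icc, Nat.mem_divisors]
    constructor
    · rintro ⟨hd, -⟩
      have hd1 : d ∣ p.1 := hd.trans (Nat.gcd_dvd_left _ _)
      have hd2 : d ∣ p.2 := hd.trans (Nat.gcd_dvd_right _ _)
      have : d ≤ p.1 := Nat.le_of_dvd (by omega) hd1
      have hdpos : 0 < d := Nat.pos_of_dvd_of_pos hd1 (by omega)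
      exact ⟨⟨hdpos, by omega⟩, hd1, hd2⟩
    · rintro ⟨⟨h1, h2⟩, hd1, hd2⟩
      exact ⟨Nat.dvd_gcd hd1 hd2, hg⟩
  rw [Finset.sum_congr rfl key, Finset.sum_comm]
  apply Finset.sum_congr rfl
  intro d hd
  rw [← Finset.sum_filter, Finset.sum_const]
  have : (Finset.Ioc 0 m ×ˢ Finset.Ioc 0 M).filter (fun p => d ∣ p.1 ∧ d ∣ p.2)
      = ((Finset.Ioc 0 m).filter (d ∣ ·)) ×ˢ ((Finset.Ioc 0 M).filter (d ∣ ·)) := by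
    rw [Finset.filter_product]
  rw [this, Finset.card_product, Nat.Ioc_filter_dvd_card_eq_div, Nat.Ioc_filter_dvd_card_eq_div]
  push_cast
  ring_nf
  norm_cast

lemma fp_num_den {a b : ℕ} (ha : 0 < a) (hb : 0 < b) (h : Nat.gcd a b = 1) :
    ((a : ℚ) / ((a + b : ℕ) : ℚ)).num = a ∧ ((a : ℚ) / ((a + b : ℕ) : ℚ)).den = a + b := by
  have hcop : Nat.Coprime a (a + b) := by
    rw [add_comm]; exact Nat.coprime_add_self_right.mpr h
  have hb0 : (0 : ℤ) < ((a + b : ℕ) : ℤ) := by positivity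
  have hcop' : Nat.Coprime ((a : ℤ)).natAbs (((a + b : ℕ) : ℤ)).natAbs := by
    rw [Int.natAbs_natCast, Int.natAbs_natCast]; exact hcop
  have hnum := Rat.num_div_eq_of_coprime hb0 hcop'
  have hden := Rat.den_div_eq_of_coprime hb0 hcop'
  rw [Int.cast_natCast, Int.cast_natCast] at hnum hden
  exact ⟨hnum, by exact_mod_cast hden⟩


open ArithmeticFunction in
/-- `|F(B(n),m)| = 2 + ∑_{d ≥ 1} μ(d) ⌊m/d⌋ ⌊(n-m)/d⌋` (the summand vanishes
for `d > min(m, n-m)`, so summing over `1 ≤ d ≤ n` captures all terms). -/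
theorem stmt18 (m n : ℕ) (hm : 0 < m) (hmn : m < n) :
    ((fareyB n m).ncard : ℤ) =
      2 + ∑ d ∈ Finset.Icc 1 n,
        (moebius d) * ((m / d : ℕ) : ℤ) * (((n - m) / d : ℕ) : ℤ) := by
  classical
  set s : Finset (ℕ × ℕ) :=
    (Finset.Ioc 0 m ×ˢ Finset.Ioc 0 (n - m)).filter (fun p => Nat.gcd p.1 p.2 = 1) with hs
  set f : ℕ × ℕ → ℚ := fun p => (p.1 : ℚ) / ((p.1 + p.2 : ℕ) : ℚ) with hf
  have hmem : ∀ p ∈ s, 0 < p.1 ∧ p.1 ≤ m ∧ 0 < p.2 ∧ p.2 ≤ n - m ∧ Nat.gcd p.1 p.2 = 1 := by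
    intro p hp
    simp only [hs, Finset.mem_filter, Finset.mem_product, Finset.mem_Ioc] at hp
    tauto
  have hnd : ∀ p ∈ s, (f p).num = p.1 ∧ (f p).den = p.1 + p.2 := by
    intro p hp
    obtain ⟨h1, h2, h3, h4, h5⟩ := hmem p hp
    exact fp_num_den h1 h3 h5
  have himg : fareyB n m = ↑(insert (0:ℚ) (insert 1 (s.image f))) := by
    ext q
    simp only [Finset.coe_insert, Set.mem_insert_iff, Finset.coe_image, Set.mem_image,
      Finset.mem_coe, fareyB, farey, Set.mem_setOf_eq]
    constructor
    · rintro ⟨⟨hq0, hq1, hden⟩, hlow, hupp⟩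
      rcases eq_or_lt_of_le hq0 with h0 | h0
      · exact Or.inl h0.symm
      rcases eq_or_lt_of_le hq1 with h1 | h1
      · exact Or.inr (Or.inl h1)
      right; right
      have hnum0 : 0 < q.num := Rat.num_pos.mpr h0
      have hnumden : q.num < (q.den : ℤ) := Rat.lt_one_iff_num_lt_denom.mpr h1
      have habs : q.num.toNat = q.num.natAbs := by omega
      refine ⟨(q.num.toNat, q.den - q.num.toNat), ?_, ?_⟩
      · simp only [hs, Finset.mem_filter, Finset.mem_product, Finset.mem_Ioc]
        refine ⟨⟨⟨by omega, by omega⟩, ⟨by omega, by omega⟩⟩, ?_⟩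
        rw [Nat.gcd_sub_self_right (by omega), habs]
        exact q.reduced
      · simp only [hf]
        rw [show q.num.toNat + (q.den - q.num.toNat) = q.den from by omega]
        have hc : ((q.num.toNat : ℕ) : ℚ) = ((q.num : ℤ) : ℚ) := by
          exact_mod_cast congrArg (Int.cast : ℤ → ℚ) (Int.toNat_of_nonneg hnum0.le)
        rw [hc]
        exact Rat.num_div_den q
    · have hden01 : ∀ p ∈ s, (f p).num = p.1 ∧ (f p).den = p.1 + p.2 := hnd
      rintro (rfl | rfl | ⟨p, hp, rfl⟩)
      · refine ⟨⟨le_refl _, zero_le_one, ?_⟩, ?_, ?_⟩ <;>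
          simp only [Rat.num_zero, Rat.den_zero] <;> omega
      · refine ⟨⟨zero_le_one, le_refl _, ?_⟩, ?_, ?_⟩ <;>
          simp only [Rat.num_one, Rat.den_one] <;> omega
      · obtain ⟨h1, h2, h3, h4, h5⟩ := hmem p hp
        obtain ⟨hn', hd'⟩ := hnd p hp
        have hq0 : 0 ≤ f p := Rat.num_nonneg.mp (by rw [hn']; positivity)
        have hq1 : f p < 1 := Rat.lt_one_iff_num_lt_denom.mp (by rw [hn', hd']; exact_mod_cast by omega)
        exact ⟨⟨hq0, hq1.le, by rw [hd']; omega⟩, by rw [hn', hd']; push_cast; omega,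
          by rw [hn']; exact_mod_cast h2⟩
  rw [himg, Set.ncard_coe_finset]
  have h1img : (1:ℚ) ∉ s.image f := by
    intro h
    obtain ⟨p, hp, hfp⟩ := Finset.mem_image.mp h
    obtain ⟨hn', hd'⟩ := hnd p hp
    obtain ⟨hp1, -, hp3, -, -⟩ := hmem p hp
    rw [hfp] at hn' hd'
    rw [Rat.num_one] at hn'; rw [Rat.den_one] at hd'
    omega
  have h0img : (0:ℚ) ∉ insert 1 (s.image f) := by
    intro h
    rcases Finset.mem_insert.mp h with h | h
    · exact one_ne_zero h.symm
    obtain ⟨p, hp, hfp⟩ := Finset.mem_image.mp h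
    obtain ⟨hn', -⟩ := hnd p hp
    obtain ⟨hp1, -⟩ := hmem p hp
    rw [hfp, Rat.num_zero] at hn'
    omega
  rw [Finset.card_insert_of_notMem h0img, Finset.card_insert_of_notMem h1img,
    Finset.card_image_of_injOn]
  · push_cast
    rw [count_coprime_pairs m (n - m) n (le_of_lt hmn) (by omega)]
    norm_cast
    ring
  · intro p hp p' hp' hpp
    obtain ⟨hn1, hd1⟩ := hnd p (Finset.mem_coe.mp hp)
    obtain ⟨hn2, hd2⟩ := hnd p' (Finset.mem_coe.mp hp')
    rw [hpp] at hn1 hd1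
    have e1 : (p.1 : ℤ) = p'.1 := by rw [← hn1, ← hn2]
    have e2 : p.1 + p.2 = p'.1 + p'.2 := by rw [← hd1, ← hd2]
    have : p.1 = p'.1 := by exact_mod_cast e1
    exact Prod.ext this (by omega)
end
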